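/- arXiv:1907.05141 — 6 statements merged into one kernel-verified Lean document; each statement's English description precedes it below -/
import Mathlib

section
/- For parameters α, λ > 0 and β ∈ (0,1), and any z in the open complex ball B = {z ∈ ℂ : |z| < λ}, the integral ∫₀^∞ (e^{izx} − 1) · α x^{−(1+β)} e^{−λx} dx equals α Γ(−β) [(λ − iz)^β − λ^β], where the power uses the principal branch of the complex logarithm. -/
open MeasureTheory Set Complex


lemma norm_cexp_sub_one_le (w : ℂ) : ‖Complex.exp w - 1‖ ≤ ‖w‖ * Real.exp ‖w‖ := by
  have hderiv : ∀ t ∈ Set.Icc (0:ℝ) 1,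
      HasDerivWithinAt (fun t : ℝ ↦ Complex.exp ((t : ℂ) * w))
        (Complex.exp ((t : ℂ) * w) * w) (Set.Icc (0:ℝ) 1) t := by
    intro t _
    have h1 : HasDerivAt (fun t : ℝ ↦ (t : ℂ) * w) w t := by
      simpa using (Complex.ofRealCLM.hasDerivAt (x := t)).mul_const w
    exact (h1.cexp).hasDerivWithinAt
  have hbound : ∀ t ∈ Set.Icc (0:ℝ) 1,
      ‖Complex.exp ((t : ℂ) * w) * w‖ ≤ Real.exp ‖w‖ * ‖w‖ := by
    intro t ht
    rw [norm_mul, Complex.norm_exp]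
    gcongr
    have : ((t : ℂ) * w).re = t * w.re := by simp
    rw [this]
    calc t * w.re ≤ 1 * |w.re| := by
          rcases le_or_gt 0 w.re with h | h
          · exact mul_le_mul ht.2 (le_abs_self _) h zero_le_one
          · rw [one_mul]
            exact le_trans (mul_nonpos_of_nonneg_of_nonpos ht.1 h.le) (abs_nonneg _)
      _ ≤ ‖w‖ := by rw [one_mul]; exact Complex.abs_re_le_norm w
  have := (convex_Icc (0:ℝ) 1).norm_image_sub_le_of_norm_hasDerivWithin_le hderiv hbound
    (Set.left_mem_Icc.2 zero_le_one) (Set.right_mem_Icc.2 zero_le_one)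
  simpa [mul_comm] using this


lemma integrableOn_rpow_exp {c a : ℝ} (hc : -1 < c) (ha : 0 < a) :
    IntegrableOn (fun x : ℝ ↦ x ^ c * Real.exp (-(a * x))) (Set.Ioi 0) := by
  have := integrableOn_rpow_mul_exp_neg_mul_rpow hc zero_lt_one ha
  refine this.congr_fun (fun x hx ↦ ?_) measurableSet_Ioi
  dsimp only
  rw [Real.rpow_one, neg_mul]

lemma contOn_aux (c : ℝ) (w : ℂ) :
    ContinuousOn (fun x : ℝ ↦ ((x ^ c : ℝ) : ℂ) * Complex.exp (-(w * x))) (Set.Ioi 0) := by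
  apply ContinuousOn.mul
  · exact Complex.continuous_ofReal.comp_continuousOn
      (fun x hx ↦ (Real.continuousAt_rpow_const x c (Or.inl (ne_of_gt hx))).continuousWithinAt)
  · exact (Complex.continuous_exp.comp
      ((continuous_const.mul Complex.continuous_ofReal).neg)).continuousOn

lemma norm_aux (c : ℝ) (w : ℂ) {x : ℝ} (hx : 0 < x) :
    ‖((x ^ c : ℝ) : ℂ) * Complex.exp (-(w * x))‖ = x ^ c * Real.exp (-(w.re * x)) := by
  rw [norm_mul, Complex.norm_exp, Complex.norm_real, Real.norm_eq_abs,
    _root_.abs_of_nonneg (Real.rpow_nonneg hx.le c)]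
  congr 1
  simp [Complex.neg_re, Complex.mul_re]

lemma integrableOn_cpow_exp {c : ℝ} (hc : -1 < c) {w : ℂ} (hw : 0 < w.re) :
    IntegrableOn (fun x : ℝ ↦ ((x ^ c : ℝ) : ℂ) * Complex.exp (-(w * x))) (Set.Ioi 0) := by
  refine Integrable.mono' ((integrableOn_rpow_exp hc hw).congr_fun (fun x hx ↦ rfl) measurableSet_Ioi)
    ((contOn_aux c w).aestronglyMeasurable measurableSet_Ioi) ?_
  filter_upwards [ae_restrict_mem measurableSet_Ioi] with x hx
  rw [norm_aux c w hx]

lemma key_diff (c : ℝ) {w₀ : ℂ} (hc : -1 < c) (hw₀ : 0 < w₀.re) :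
    HasDerivAt (fun w : ℂ ↦ ∫ x in Set.Ioi (0:ℝ), ((x ^ c : ℝ) : ℂ) * Complex.exp (-(w * x)))
      (∫ x in Set.Ioi (0:ℝ), ((x ^ c : ℝ) : ℂ) * (-(x : ℂ) * Complex.exp (-(w₀ * x)))) w₀ := by
  set ε := w₀.re / 2 with hε
  have hεpos : 0 < ε := by positivity
  have main := hasDerivAt_integral_of_dominated_loc_of_deriv_le (μ := volume.restrict (Set.Ioi 0))
    (F := fun w (x : ℝ) ↦ ((x ^ c : ℝ) : ℂ) * Complex.exp (-(w * x)))
    (F' := fun w (x : ℝ) ↦ ((x ^ c : ℝ) : ℂ) * (-(x : ℂ) * Complex.exp (-(w * x))))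
    (bound := fun x : ℝ ↦ x ^ (c + 1) * Real.exp (-(ε * x)))
    (x₀ := w₀) (Metric.ball_mem_nhds w₀ hεpos) ?_ ?_ ?_ ?_ ?_ ?_
  · exact main.2
  · filter_upwards with w
    exact (contOn_aux c w).aestronglyMeasurable measurableSet_Ioi
  · exact integrableOn_cpow_exp hc hw₀
  · apply ContinuousOn.aestronglyMeasurable _ measurableSet_Ioi
    apply ContinuousOn.mul
    · exact Complex.continuous_ofReal.comp_continuousOn
        (fun x hx ↦ (Real.continuousAt_rpow_const x c (Or.inl (ne_of_gt hx))).continuousWithinAt)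
    · exact (((continuous_ofReal.neg).mul (Complex.continuous_exp.comp
        ((continuous_const.mul Complex.continuous_ofReal).neg))).continuousOn)
  · filter_upwards [ae_restrict_mem measurableSet_Ioi] with x hx w hw
    have hre : ε ≤ w.re := by
      have : |w.re - w₀.re| ≤ ‖w - w₀‖ := by
        simpa using Complex.abs_re_le_norm (w - w₀)
      have h2 : ‖w - w₀‖ < ε := by simpa [Metric.mem_ball, dist_eq_norm] using hw
      have := (abs_le.mp ((le_of_lt (lt_of_le_of_lt this h2)))).1
      linarith [hε ▸ this]
    have heq : ‖((x ^ c : ℝ) : ℂ) * (-(x : ℂ) * Complex.exp (-(w * x)))‖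
        = x ^ (c + 1) * Real.exp (-(w.re * x)) := by
      rw [norm_mul, norm_mul, norm_neg, Complex.norm_real, Complex.norm_real, Complex.norm_exp,
        Real.norm_eq_abs, Real.norm_eq_abs,
        _root_.abs_of_nonneg (Real.rpow_nonneg hx.le c), _root_.abs_of_nonneg hx.le,
        Real.rpow_add hx c 1, Real.rpow_one]
      have h3 : (-(w * (x:ℂ))).re = -(w.re * x) := by simp [Complex.mul_re]
      rw [h3]; ring
    rw [heq]
    have : Real.exp (-(w.re * x)) ≤ Real.exp (-(ε * x)) := by
      apply Real.exp_le_exp.2; nlinarith [mem_Ioi.mp hx]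
    exact mul_le_mul_of_nonneg_left this (Real.rpow_nonneg hx.le _)
  · exact integrableOn_rpow_exp (by linarith) hεpos
  · filter_upwards [ae_restrict_mem measurableSet_Ioi] with x hx w hw
    have h1 : HasDerivAt (fun w : ℂ ↦ -(w * (x:ℂ))) (-(x:ℂ)) w := by
      exact (((hasDerivAt_id w).mul_const (x:ℂ)).neg).congr_deriv (by simp)
    simpa [mul_comm] using h1.cexp.const_mul ((x ^ c : ℝ) : ℂ)

lemma key_integral (β : ℝ) (hβ : β ∈ Set.Ioo (0:ℝ) 1) {w : ℂ} (hw : 0 < w.re) :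
    ∫ x in Set.Ioi (0:ℝ), ((x ^ (-β) : ℝ) : ℂ) * Complex.exp (-(w * x))
      = Complex.Gamma (1 - β) * w ^ ((β:ℂ) - 1) := by
  have hc : (-1 : ℝ) < -β := by linarith [hβ.2]
  set U : Set ℂ := {w : ℂ | 0 < w.re} with hU
  have hUopen : IsOpen U := isOpen_lt continuous_const Complex.continuous_re
  set f : ℂ → ℂ := fun w ↦ ∫ x in Set.Ioi (0:ℝ), ((x ^ (-β) : ℝ) : ℂ) * Complex.exp (-(w * x))
  set g : ℂ → ℂ := fun w ↦ Complex.Gamma (1 - β) * w ^ ((β:ℂ) - 1)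
  have hf : AnalyticOnNhd ℂ f U := by
    refine DifferentiableOn.analyticOnNhd (fun w hw ↦ ?_) hUopen
    exact ((key_diff (-β) hc hw).differentiableAt).differentiableWithinAt
  have hg : AnalyticOnNhd ℂ g U := by
    refine DifferentiableOn.analyticOnNhd (fun w hw ↦ ?_) hUopen
    exact ((((hasDerivAt_id w).cpow_const (Or.inl hw)).const_mul
      (Complex.Gamma (1 - β))).differentiableAt).differentiableWithinAt
  have hreal : ∀ r : ℝ, 0 < r → f r = g r := by
    intro r hr
    have h1 := Complex.integral_cpow_mul_exp_neg_mul_Ioi (a := 1 - (β:ℂ))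
      (by simp; linarith [hβ.2]) hr
    have h2 : f r = ∫ x in Set.Ioi (0:ℝ), (x:ℂ) ^ ((1:ℂ) - β - 1) * Complex.exp (-((r:ℂ) * x)) := by
      refine setIntegral_congr_fun measurableSet_Ioi (fun x hx ↦ ?_)
      have hx0 : (0:ℝ) ≤ x := (mem_Ioi.mp hx).le
      rw [Complex.ofReal_cpow hx0]
      push_cast
      congr 1
      ring
    rw [h2, h1]
    have harg : (r:ℂ).arg ≠ Real.pi := by
      rw [Complex.arg_ofReal_of_nonneg hr.le]
      exact Real.pi_ne_zero.symm
    rw [one_div, Complex.inv_cpow _ _ harg, ← Complex.cpow_neg]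
    have : -((1:ℂ) - β) = (β:ℂ) - 1 := by ring
    rw [this, mul_comm]
  have hfreq : ∃ᶠ z in nhdsWithin (1:ℂ) {(1:ℂ)}ᶜ, f z = g z := by
    have htend : Filter.Tendsto (fun n : ℕ ↦ ((1 + 1/(n+1) : ℝ) : ℂ)) Filter.atTop
        (nhdsWithin (1:ℂ) {(1:ℂ)}ᶜ) := by
      rw [tendsto_nhdsWithin_iff]
      constructor
      · have : Filter.Tendsto (fun n : ℕ ↦ (1 + 1/(n+1) : ℝ)) Filter.atTop (nhds 1) := by
          simpa using (tendsto_one_div_add_atTop_nhds_zero_nat (𝕜 := ℝ)).const_add 1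
        exact (Complex.continuous_ofReal.tendsto 1).comp this
      · filter_upwards with n
        simp only [Set.mem_compl_iff, Set.mem_singleton_iff]
        intro h
        have : (1 + 1/((n:ℝ)+1) : ℝ) = 1 := by exact_mod_cast Complex.ofReal_eq_one.mp h
        have hn : (0:ℝ) < 1/((n:ℝ)+1) := by positivity
        linarith
    refine htend.frequently (Filter.Frequently.of_forall (fun n ↦ hreal _ ?_))
    positivity
  have hEq : Set.EqOn f g U := hf.eqOn_of_preconnected_of_frequently_eq hg
    (convex_halfSpace_re_gt 0).isPreconnected (by simp [hU]) hfreq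
  exact hEq hw

lemma rpow_aux {x : ℝ} (hx : 0 < x) (β : ℝ) : x * x ^ (-(1+β)) = x ^ (-β) := by
  have h := Real.rpow_add hx 1 (-(1+β))
  rw [Real.rpow_one] at h
  rw [← h]
  congr 1
  ring

lemma F_hasDeriv (α lam β : ℝ) (hα : 0 < α) (hlam : 0 < lam) (hβ : β ∈ Set.Ioo (0:ℝ) 1)
    (z₀ : ℂ) (hz₀ : ‖z₀‖ < lam) :
    HasDerivAt (fun z : ℂ ↦ ∫ x in Set.Ioi (0:ℝ),
        (Complex.exp (Complex.I * z * (x:ℂ)) - 1) *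
          ((α * x ^ (-(1 + β)) * Real.exp (-lam * x) : ℝ) : ℂ))
      ((α : ℂ) * Complex.I *
        (Complex.Gamma (1 - β) * ((lam:ℂ) - Complex.I * z₀) ^ ((β:ℂ) - 1))) z₀ := by
  have hβ1 : (-1:ℝ) < -β := by linarith [hβ.2]
  set c := ‖z₀‖ with hcdef
  have hc0 : 0 ≤ c := norm_nonneg z₀
  set r : ℝ := (lam + c)/2 with hrdef
  set ε : ℝ := (lam - c)/2 with hεdef
  have hεpos : 0 < ε := by simp [hεdef]; linarith
  have hlr : 0 < lam - r := by simp [hrdef]; linarith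
  have hcr : c ≤ r := by simp [hrdef]; linarith
  -- continuity of the weight
  have hgc : ContinuousOn (fun x : ℝ ↦ ((α * x ^ (-(1 + β)) * Real.exp (-lam * x) : ℝ) : ℂ))
      (Set.Ioi 0) := by
    apply Complex.continuous_ofReal.comp_continuousOn
    apply ContinuousOn.mul
    · exact continuousOn_const.mul
        (fun x hx ↦ (Real.continuousAt_rpow_const x _ (Or.inl (ne_of_gt hx))).continuousWithinAt)
    · exact (Real.continuous_exp.comp (continuous_const.mul continuous_id)).continuousOn
  have hgnonneg : ∀ x : ℝ, 0 < x → 0 ≤ α * x ^ (-(1 + β)) * Real.exp (-lam * x) := by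
    intro x hx; positivity
  -- norm of weight
  have hwnorm : ∀ x : ℝ, 0 < x →
      ‖((α * x ^ (-(1 + β)) * Real.exp (-lam * x) : ℝ) : ℂ)‖
        = α * x ^ (-(1 + β)) * Real.exp (-lam * x) := by
    intro x hx
    rw [Complex.norm_real, Real.norm_eq_abs, _root_.abs_of_nonneg (hgnonneg x hx)]
  have habsexp : ∀ (z : ℂ) (x : ℝ), ‖Complex.exp (Complex.I * z * x)‖
      = Real.exp (-(z.im * x)) := by
    intro z x
    rw [Complex.norm_exp]
    congr 1
    simp [Complex.mul_re, Complex.mul_im]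
  have main := hasDerivAt_integral_of_dominated_loc_of_deriv_le
    (μ := volume.restrict (Set.Ioi (0:ℝ)))
    (F := fun (z : ℂ) (x : ℝ) ↦ (Complex.exp (Complex.I * z * (x:ℂ)) - 1) *
          ((α * x ^ (-(1 + β)) * Real.exp (-lam * x) : ℝ) : ℂ))
    (F' := fun (z : ℂ) (x : ℝ) ↦ (Complex.I * x) * Complex.exp (Complex.I * z * (x:ℂ)) *
          ((α * x ^ (-(1 + β)) * Real.exp (-lam * x) : ℝ) : ℂ))
    (bound := fun x : ℝ ↦ α * (x ^ (-β) * Real.exp (-((lam - r) * x))))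
    (x₀ := z₀) (Metric.ball_mem_nhds z₀ hεpos) ?_ ?_ ?_ ?_ ?_ ?_
  · -- conclude
    have hval : (∫ x in Set.Ioi (0:ℝ), (Complex.I * x) * Complex.exp (Complex.I * z₀ * (x:ℂ)) *
          ((α * x ^ (-(1 + β)) * Real.exp (-lam * x) : ℝ) : ℂ))
        = (α : ℂ) * Complex.I *
          (Complex.Gamma (1 - β) * ((lam:ℂ) - Complex.I * z₀) ^ ((β:ℂ) - 1)) := by
      set w : ℂ := (lam:ℂ) - Complex.I * z₀ with hwdef
      have hwre : 0 < w.re := by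
        have h1 : |z₀.im| ≤ c := by simpa using Complex.abs_im_le_norm z₀
        have : w.re = lam + z₀.im := by simp [hwdef]
        rw [this]
        cases' abs_le.mp h1 with h2 h3
        linarith
      have hptwise : ∀ x ∈ Set.Ioi (0:ℝ),
          (Complex.I * x) * Complex.exp (Complex.I * z₀ * (x:ℂ)) *
            ((α * x ^ (-(1 + β)) * Real.exp (-lam * x) : ℝ) : ℂ)
          = ((α : ℂ) * Complex.I) * (((x ^ (-β) : ℝ) : ℂ) * Complex.exp (-(w * x))) := by
        intro x hx
        have hx0 : 0 < x := mem_Ioi.mp hx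
        have hexp : Complex.exp (-(w * x)) =
            Complex.exp (Complex.I * z₀ * (x:ℂ)) * Complex.exp (-lam * x : ℝ) := by
          rw [← Complex.exp_add]
          congr 1
          push_cast
          rw [hwdef]
          ring
        rw [hexp, ← rpow_aux hx0 β]
        push_cast
        ring
      rw [setIntegral_congr_fun measurableSet_Ioi hptwise, integral_const_mul,
        key_integral β hβ hwre]
    rw [← hval]
    exact main.2
  · -- hF_meas
    filter_upwards with z
    apply ContinuousOn.aestronglyMeasurable _ measurableSet_Ioi
    exact (((Complex.continuous_exp.comp
      ((continuous_const.mul Complex.continuous_ofReal))).sub continuous_const).continuousOn).mul hgc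
  · -- hF_int
    have hint : IntegrableOn (fun x : ℝ ↦ (c * α) * (x ^ (-β) * Real.exp (-((lam - c) * x))))
        (Set.Ioi 0) := (integrableOn_rpow_exp hβ1 (by linarith)).const_mul _
    refine Integrable.mono' hint ?_ ?_
    · apply ContinuousOn.aestronglyMeasurable _ measurableSet_Ioi
      exact (((Complex.continuous_exp.comp
        ((continuous_const.mul Complex.continuous_ofReal))).sub continuous_const).continuousOn).mul hgc
    · filter_upwards [ae_restrict_mem measurableSet_Ioi] with x hx
      have hx0 : 0 < x := mem_Ioi.mp hx
      rw [norm_mul, hwnorm x hx0]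
      have h1 : ‖Complex.exp (Complex.I * z₀ * (x:ℂ)) - 1‖
          ≤ (c * x) * Real.exp (c * x) := by
        have := norm_cexp_sub_one_le (Complex.I * z₀ * (x:ℂ))
        have hn : ‖Complex.I * z₀ * (x:ℂ)‖ = c * x := by
          simp [map_mul, _root_.abs_of_nonneg hx0.le,
            hcdef]
        rwa [hn] at this
      calc ‖Complex.exp (Complex.I * z₀ * (x:ℂ)) - 1‖ * (α * x ^ (-(1 + β)) * Real.exp (-lam * x))
          ≤ ((c * x) * Real.exp (c * x)) * (α * x ^ (-(1 + β)) * Real.exp (-lam * x)) := by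
            apply mul_le_mul_of_nonneg_right h1 (hgnonneg x hx0)
        _ = (c * α) * (x ^ (-β) * Real.exp (-((lam - c) * x))) := by
            rw [← rpow_aux hx0 β, show -((lam - c) * x) = c * x + -lam * x by ring,
              Real.exp_add]
            ring
  · -- hF'_meas
    apply ContinuousOn.aestronglyMeasurable _ measurableSet_Ioi
    exact (((continuous_const.mul Complex.continuous_ofReal).mul (Complex.continuous_exp.comp
      ((continuous_const.mul Complex.continuous_ofReal)))).continuousOn).mul hgc
  · -- h_bound
    filter_upwards [ae_restrict_mem measurableSet_Ioi] with x hx z hz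
    have hx0 : 0 < x := mem_Ioi.mp hx
    have hzr : ‖z‖ ≤ r := by
      have h1 : ‖z‖ ≤ c + dist z z₀ := by
        rw [dist_eq_norm]
        calc ‖z‖ = ‖z₀ + (z - z₀)‖ := by ring_nf
          _ ≤ ‖z₀‖ + ‖z - z₀‖ := norm_add_le _ _
      have h2 : dist z z₀ < ε := Metric.mem_ball.mp hz
      have he : ε = (lam - c)/2 := hεdef
      have hr : r = (lam + c)/2 := hrdef
      linarith
    rw [norm_mul, hwnorm x hx0, norm_mul]
    have h2 : ‖Complex.exp (Complex.I * z * (x:ℂ))‖ ≤ Real.exp (r * x) := by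
      rw [habsexp z x]
      apply Real.exp_le_exp.2
      have : |z.im| ≤ ‖z‖ := by simpa using Complex.abs_im_le_norm z
      nlinarith [abs_le.mp this]
    have h3 : ‖Complex.I * (x:ℂ)‖ = x := by
      simp [map_mul, _root_.abs_of_nonneg hx0.le]
    rw [h3]
    calc x * ‖Complex.exp (Complex.I * z * (x:ℂ))‖ * (α * x ^ (-(1 + β)) * Real.exp (-lam * x))
        ≤ x * Real.exp (r * x) * (α * x ^ (-(1 + β)) * Real.exp (-lam * x)) := by
          apply mul_le_mul_of_nonneg_right (mul_le_mul_of_nonneg_left h2 hx0.le)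
            (hgnonneg x hx0)
      _ = α * (x ^ (-β) * Real.exp (-((lam - r) * x))) := by
          rw [← rpow_aux hx0 β, show -((lam - r) * x) = r * x + -lam * x by ring,
            Real.exp_add]
          ring
  · -- bound integrable
    exact (integrableOn_rpow_exp hβ1 hlr).const_mul α
  · -- h_diff
    filter_upwards [ae_restrict_mem measurableSet_Ioi] with x hx z hz
    have h1 : HasDerivAt (fun z : ℂ ↦ Complex.I * z * (x:ℂ)) (Complex.I * x) z := by
      simpa using (((hasDerivAt_id z).const_mul Complex.I).mul_const (x:ℂ))
    have h2 := ((h1.cexp).sub_const 1).mul_const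
      ((α * x ^ (-(1 + β)) * Real.exp (-lam * x) : ℝ) : ℂ)
    exact h2.congr_deriv (by ring)

/-- For parameters `α, λ > 0` and `β ∈ (0,1)`, and any complex `z` with
`|z| < λ`, the integral `∫₀^∞ (e^{izx} − 1) · α x^{−(1+β)} e^{−λx} dx` equals
`α Γ(−β) [(λ − iz)^β − λ^β]` (principal branch powers). -/
theorem tempered_stable_characteristic_integral
    (α lam β : ℝ) (hα : 0 < α) (hlam : 0 < lam) (hβ : β ∈ Set.Ioo (0:ℝ) 1)
    (z : ℂ) (hz : ‖z‖ < lam) :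
    (∫ x in Set.Ioi (0:ℝ),
        (Complex.exp (Complex.I * z * (x:ℂ)) - 1) *
          ((α * x ^ (-(1 + β)) * Real.exp (-lam * x) : ℝ) : ℂ))
      = (α : ℂ) * Complex.Gamma (-(β : ℂ)) *
          (((lam : ℂ) - Complex.I * z) ^ (β : ℂ) - (lam : ℂ) ^ (β : ℂ)) := by
  set F : ℂ → ℂ := fun z ↦ ∫ x in Set.Ioi (0:ℝ),
      (Complex.exp (Complex.I * z * (x:ℂ)) - 1) *
        ((α * x ^ (-(1 + β)) * Real.exp (-lam * x) : ℝ) : ℂ) with hF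
  set G : ℂ → ℂ := fun z ↦ (α : ℂ) * Complex.Gamma (-(β : ℂ)) *
      (((lam : ℂ) - Complex.I * z) ^ (β : ℂ) - (lam : ℂ) ^ (β : ℂ)) with hG
  have hβ0 : -(β:ℂ) ≠ 0 := by
    simp only [ne_eq, neg_eq_zero, Complex.ofReal_eq_zero]
    exact ne_of_gt hβ.1
  have hGamma : Complex.Gamma (1 - β) = (-(β:ℂ)) * Complex.Gamma (-(β:ℂ)) := by
    rw [show (1:ℂ) - β = -(β:ℂ) + 1 by ring, Complex.Gamma_add_one _ hβ0]
  -- derivative of G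
  have hGderiv : ∀ z₀ : ℂ, ‖z₀‖ < lam →
      HasDerivAt G ((α : ℂ) * Complex.I *
        (Complex.Gamma (1 - β) * ((lam:ℂ) - Complex.I * z₀) ^ ((β:ℂ) - 1))) z₀ := by
    intro z₀ hz₀
    have hwre : 0 < ((lam:ℂ) - Complex.I * z₀).re := by
      have h1 : |z₀.im| ≤ ‖z₀‖ := by simpa using Complex.abs_im_le_norm z₀
      have h2 : ((lam:ℂ) - Complex.I * z₀).re = lam + z₀.im := by
        simp [Complex.sub_re, Complex.mul_re]
      rw [h2]
      cases' abs_le.mp h1 with h3 h4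
      linarith
    have h1 : HasDerivAt (fun z : ℂ ↦ (lam:ℂ) - Complex.I * z) (-Complex.I) z₀ := by
      simpa using ((hasDerivAt_id z₀).const_mul Complex.I).const_sub (lam:ℂ)
    have h2 := (h1.cpow_const (c := (β:ℂ)) (Or.inl hwre)).sub_const ((lam:ℂ) ^ (β:ℂ))
    have h3 := h2.const_mul ((α : ℂ) * Complex.Gamma (-(β : ℂ)))
    rw [show (α : ℂ) * Complex.I *
        (Complex.Gamma (1 - β) * ((lam:ℂ) - Complex.I * z₀) ^ ((β:ℂ) - 1))
        = (α : ℂ) * Complex.Gamma (-(β : ℂ)) * ((β:ℂ) * ((lam:ℂ) - Complex.I * z₀) ^ ((β:ℂ) - 1) * -Complex.I) by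
      rw [hGamma]; ring]
    exact h3
  -- F - G is constant on the ball
  have key : ∀ z₀ ∈ Metric.ball (0:ℂ) lam, F z₀ - G z₀ = F 0 - G 0 := by
    intro z₀ hz₀
    have hball : ∀ y ∈ Metric.ball (0:ℂ) lam, ‖y‖ < lam := by
      intro y hy
      simpa [Complex.dist_eq] using Metric.mem_ball.mp hy
    have hderiv : ∀ y ∈ Metric.ball (0:ℂ) lam,
        HasDerivWithinAt (fun z ↦ F z - G z) 0 (Metric.ball (0:ℂ) lam) y := by
      intro y hy
      have h := (F_hasDeriv α lam β hα hlam hβ y (hball y hy)).sub (hGderiv y (hball y hy))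
      rw [sub_self] at h
      exact h.hasDerivWithinAt
    have hbound : ∀ y ∈ Metric.ball (0:ℂ) lam, ‖(0:ℂ)‖ ≤ 0 := by simp
    have h0mem : (0:ℂ) ∈ Metric.ball (0:ℂ) lam := by
      simpa using hlam
    have := (convex_ball (0:ℂ) lam).norm_image_sub_le_of_norm_hasDerivWithin_le
      hderiv hbound h0mem hz₀
    rw [zero_mul] at this
    exact sub_eq_zero.mp (norm_le_zero_iff.mp this)
  have hF0 : F 0 = 0 := by
    have h : (∫ x in Set.Ioi (0:ℝ),
        (Complex.exp (Complex.I * (0:ℂ) * (x:ℂ)) - 1) *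
          ((α * x ^ (-(1 + β)) * Real.exp (-lam * x) : ℝ) : ℂ)) = 0 := by
      rw [setIntegral_congr_fun measurableSet_Ioi
        (g := fun _ : ℝ ↦ (0:ℂ)) (fun x _ ↦ by simp)]
      simp
    exact h
  have hG0 : G 0 = 0 := by rw [hG]; simp
  have hzmem : z ∈ Metric.ball (0:ℂ) lam := by
    simpa [Complex.dist_eq] using hz
  have := key z hzmem
  rw [hF0, hG0] at this
  have hfin : F z = G z := by
    have h2 := sub_eq_zero.mp (by simpa using this)
    exact h2
  exact hfin
end

section
/- For α, λ > 0, β ∈ (0,1), and |z| < λ (z complex), the series identity α ∑_{n≥1} (iz)^n/n! · λ^{β−n} Γ(n−β) = α Γ(−β) λ^β [(1 − iz/λ)^β − 1] holds, where the power uses the principal branch. -/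
open Complex Finset

lemma iteratedDeriv_cpow_const (s : ℂ) :
    ∀ n : ℕ, ∀ x : ℂ, 0 < x.re →
      iteratedDeriv n (fun w : ℂ => w ^ s) x
        = (∏ k ∈ Finset.range n, (s - k)) * x ^ (s - n) := by
  intro n
  induction n with
  | zero => intro x hx; simp
  | succ n ih =>
    intro x hx
    rw [iteratedDeriv_succ]
    have hEq : Set.EqOn (iteratedDeriv n (fun w : ℂ => w ^ s))
        (fun w => (∏ k ∈ Finset.range n, (s - k)) * w ^ (s - n))
        {w : ℂ | 0 < w.re} := fun w hw => ih w hw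
    have hopen : IsOpen {w : ℂ | 0 < w.re} :=
      isOpen_lt continuous_const Complex.continuous_re
    have hev : iteratedDeriv n (fun w : ℂ => w ^ s)
        =ᶠ[nhds x] fun w => (∏ k ∈ Finset.range n, (s - k)) * w ^ (s - n) :=
      Filter.eventuallyEq_of_mem (hopen.mem_nhds hx) hEq
    rw [hev.deriv_eq]
    have hslit : x ∈ Complex.slitPlane := Or.inl hx
    have hd : HasDerivAt (fun w : ℂ => w ^ (s - n))
        ((s - n) * x ^ (s - n - 1)) x :=
      (Complex.hasStrictDerivAt_cpow_const hslit).hasDerivAt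
    rw [deriv_const_mul _ hd.differentiableAt, hd.deriv]
    rw [Finset.prod_range_succ]
    push_cast
    rw [show s - ((n : ℂ) + 1) = s - n - 1 by ring]
    ring

lemma gamma_nat_sub (β : ℝ) (hβ : β ∈ Set.Ioo (0:ℝ) 1) :
    ∀ m : ℕ, Real.Gamma ((m : ℝ) - β)
      = Real.Gamma (-β) * ∏ k ∈ Finset.range m, ((k : ℝ) - β) := by
  intro m
  induction m with
  | zero => simp
  | succ m ih =>
    have hne : (m : ℝ) - β ≠ 0 := by
      rcases Nat.eq_zero_or_pos m with h | h
      · subst h; simpa using (ne_of_lt hβ.1).symm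
      · have : (1:ℝ) ≤ (m:ℝ) := by exact_mod_cast h
        nlinarith [hβ.2]
    have := Real.Gamma_add_one hne
    have heq : ((m : ℝ) - β) + 1 = ((m+1 : ℕ) : ℝ) - β := by push_cast; ring
    rw [← heq, this, ih, Finset.prod_range_succ]
    ring

/-- Binomial series: for `|w - 1| < 1`, `HasSum` of the Taylor series of `w ^ s` at 1. -/
lemma hasSum_cpow_taylor (s : ℂ) {w : ℂ} (hw : w ∈ Metric.ball (1:ℂ) 1) :
    HasSum (fun n : ℕ => ((n.factorial : ℂ))⁻¹ * (∏ k ∈ Finset.range n, (s - k))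
      * (w - 1) ^ n) (w ^ s) := by
  have hsub : Metric.ball (1:ℂ) 1 ⊆ {w : ℂ | 0 < w.re} := by
    intro u hu
    have : ‖u - 1‖ < 1 := by simpa [Metric.mem_ball, Complex.dist_eq] using hu
    have h1 : |(u - 1).re| ≤ ‖u - 1‖ := Complex.abs_re_le_norm _
    have h3 : (u - 1).re > -1 := (abs_lt.mp (lt_of_le_of_lt h1 this)).1
    have h4 : u.re - 1 > -1 := by simpa [Complex.sub_re] using h3
    show 0 < u.re
    linarith
  have hdiff : DifferentiableOn ℂ (fun w : ℂ => w ^ s) (Metric.ball (1:ℂ) 1) := by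
    intro u hu
    exact ((Complex.hasStrictDerivAt_cpow_const (Or.inl (hsub hu))).hasDerivAt
      ).differentiableAt.differentiableWithinAt
  have H := Complex.hasSum_taylorSeries_on_ball hdiff hw
  have h1 : (0:ℝ) < (1:ℂ).re := by norm_num
  have hfun : (fun n : ℕ => ((n.factorial : ℂ))⁻¹ • (w - 1) ^ n • iteratedDeriv n (fun w : ℂ => w ^ s) 1)
      = fun n : ℕ => ((n.factorial : ℂ))⁻¹ * (∏ k ∈ Finset.range n, (s - k)) * (w - 1) ^ n := by
    funext n
    rw [iteratedDeriv_cpow_const s n 1 h1, Complex.one_cpow]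
    simp [smul_eq_mul]
    ring
  rw [hfun] at H
  exact H

/-- For `α, λ > 0`, `β ∈ (0,1)`, and complex `z` with `|z| < λ`,
`α ∑_{n≥1} (iz)^n/n! · λ^{β−n} Γ(n−β) = α Γ(−β) λ^β [(1 − iz/λ)^β − 1]`
(principal branch power). -/
theorem tempered_stable_series_identity
    (α lam β : ℝ) (hα : 0 < α) (hlam : 0 < lam) (hβ : β ∈ Set.Ioo (0:ℝ) 1)
    (z : ℂ) (hz : ‖z‖ < lam) :
    (α : ℂ) * ∑' n : ℕ,
        (Complex.I * z) ^ (n + 1) / (Nat.factorial (n + 1) : ℂ) *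
          ((lam ^ (β - ((n : ℝ) + 1)) : ℝ) : ℂ) * ((Real.Gamma (((n : ℝ) + 1) - β) : ℝ) : ℂ)
      = (α : ℂ) * ((Real.Gamma (-β) : ℝ) : ℂ) * ((lam ^ β : ℝ) : ℂ) *
          ((1 - Complex.I * z / (lam : ℂ)) ^ (β : ℂ) - 1) := by
  set w : ℂ := 1 - Complex.I * z / (lam : ℂ) with hw_def
  have hlam0 : (lam : ℂ) ≠ 0 := by exact_mod_cast hlam.ne'
  have hwball : w ∈ Metric.ball (1:ℂ) 1 := by
    rw [Metric.mem_ball, Complex.dist_eq, hw_def]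
    have : ‖1 - Complex.I * z / lam - 1‖ = ‖z‖ / lam := by
      simp [norm_div, Complex.norm_real, Real.norm_eq_abs, abs_of_pos hlam]
    rw [this]
    rw [div_lt_one hlam]; exact hz
  have H := hasSum_cpow_taylor (β : ℂ) hwball
  -- shift off the n = 0 term
  have H1 : HasSum (fun n : ℕ => ((n+1).factorial : ℂ)⁻¹
      * (∏ k ∈ Finset.range (n+1), ((β:ℂ) - k)) * (w - 1) ^ (n+1))
      (w ^ (β:ℂ) - 1) := by
    have := (hasSum_nat_add_iff' (f := fun n : ℕ => ((n.factorial : ℂ))⁻¹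
      * (∏ k ∈ Finset.range n, ((β:ℂ) - k)) * (w - 1) ^ n) 1).mpr H
    simpa using this
  -- termwise identification
  have hterm : ∀ n : ℕ,
      (Complex.I * z) ^ (n + 1) / (Nat.factorial (n + 1) : ℂ) *
        ((lam ^ (β - ((n : ℝ) + 1)) : ℝ) : ℂ) * ((Real.Gamma (((n : ℝ) + 1) - β) : ℝ) : ℂ)
      = ((Real.Gamma (-β) : ℝ) : ℂ) * ((lam ^ β : ℝ) : ℂ) *
        (((n+1).factorial : ℂ)⁻¹ * (∏ k ∈ Finset.range (n+1), ((β:ℂ) - k))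
          * (w - 1) ^ (n+1)) := by
    intro n
    have hG : Real.Gamma (((n : ℝ) + 1) - β)
        = Real.Gamma (-β) * ∏ k ∈ Finset.range (n+1), ((k : ℝ) - β) := by
      have := gamma_nat_sub β hβ (n+1)
      push_cast at this ⊢
      convert this using 2
    have hrpow : ((lam ^ (β - ((n : ℝ) + 1)) : ℝ) : ℂ)
        = ((lam ^ β : ℝ) : ℂ) * ((lam : ℂ) ^ (n+1))⁻¹ := by
      rw [show β - ((n : ℝ) + 1) = β - ((n+1 : ℕ) : ℝ) by push_cast; ring,
        Real.rpow_sub hlam, Real.rpow_natCast]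
      push_cast
      ring
    have hwm1 : w - 1 = -(Complex.I * z / lam) := by rw [hw_def]; ring
    have hprod : (∏ k ∈ Finset.range (n+1), ((β:ℂ) - k))
        = (-1)^(n+1) * ∏ k ∈ Finset.range (n+1), ((k:ℂ) - β) := by
      calc (∏ k ∈ Finset.range (n+1), ((β:ℂ) - k))
          = ∏ k ∈ Finset.range (n+1), ((-1 : ℂ) * ((k:ℂ) - β)) :=
            Finset.prod_congr rfl (fun k _ => by ring)
        _ = (-1)^(n+1) * ∏ k ∈ Finset.range (n+1), ((k:ℂ) - β) := by
            rw [Finset.prod_mul_distrib, Finset.prod_const, Finset.card_range]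
    have key : (∏ k ∈ Finset.range (n+1), ((β:ℂ) - k)) * (w - 1) ^ (n+1)
        = (∏ k ∈ Finset.range (n+1), ((k:ℂ) - β)) * ((Complex.I * z) ^ (n+1) / (lam:ℂ) ^ (n+1)) := by
      have hp : (-(Complex.I * z / (lam:ℂ)))^(n+1)
          = (-1)^(n+1) * ((Complex.I * z)^(n+1) / (lam:ℂ)^(n+1)) := by
        rw [← neg_div, div_pow, neg_pow, mul_div_assoc]
      rw [hwm1, hprod, hp]
      have h2 : ((-1:ℂ))^(n+1) * ((-1:ℂ))^(n+1) = 1 := by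
        rw [← mul_pow]; norm_num
      linear_combination ((∏ k ∈ Finset.range (n+1), ((k:ℂ) - β))
        * ((Complex.I * z) ^ (n+1) / (lam:ℂ) ^ (n+1))) * h2
    have hprodC : ((∏ k ∈ Finset.range (n+1), ((k:ℝ) - β) : ℝ) : ℂ)
        = ∏ k ∈ Finset.range (n+1), ((k:ℂ) - β) := by
      push_cast; rfl
    rw [hG, hrpow]
    push_cast
    linear_combination (-(((Real.Gamma (-β) : ℝ) : ℂ)) * ((lam ^ β : ℝ) : ℂ)
      * (((n+1).factorial : ℂ))⁻¹) * key
  calc (α : ℂ) * ∑' n : ℕ,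
        (Complex.I * z) ^ (n + 1) / (Nat.factorial (n + 1) : ℂ) *
          ((lam ^ (β - ((n : ℝ) + 1)) : ℝ) : ℂ) * ((Real.Gamma (((n : ℝ) + 1) - β) : ℝ) : ℂ)
      = (α : ℂ) * ∑' n : ℕ, ((Real.Gamma (-β) : ℝ) : ℂ) * ((lam ^ β : ℝ) : ℂ) *
          (((n+1).factorial : ℂ)⁻¹ * (∏ k ∈ Finset.range (n+1), ((β:ℂ) - k))
            * (w - 1) ^ (n+1)) := by
        congr 1; exact tsum_congr hterm
    _ = (α : ℂ) * ((Real.Gamma (-β) : ℝ) : ℂ) * ((lam ^ β : ℝ) : ℂ) *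
          (w ^ (β:ℂ) - 1) := by
        rw [(H1.mul_left (((Real.Gamma (-β) : ℝ) : ℂ) * ((lam ^ β : ℝ) : ℂ))).tsum_eq]
        ring
end

section
/- With g(x) = (α/c) e^{−λx} x^{−(1+β)} 𝟙_{(1,∞)}(x) as above, the limit lim_{r→∞} (1/g(r)) ∫₁^{r−1} g(r−y) g(y) dy equals 2α/(βc). Equivalently, lim_{r→∞} ∫₁^{r−1} (r/((r−y)y))^{1+β} dy = 2/β. -/
open MeasureTheory Filter Set intervalIntegral

private lemma tail_aux {β : ℝ} (hβ0 : 0 < β) :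
    Filter.Tendsto
      (fun r : ℝ => ∫ y in (1:ℝ)..(r - 1), (r / ((r - y) * y)) ^ (1 + β))
      Filter.atTop (nhds (2 / β)) := by
  have hexp : (0:ℝ) ≤ 1 + β := by linarith
  set f : ℝ → ℝ → ℝ := fun r y => (r / ((r - y) * y)) ^ (1 + β) with hf
  set F : ℝ → ℝ → ℝ := fun r => (Ioc (1:ℝ) (r/2)).indicator (f r) with hF
  have hval : (∫ y in Ioi (1:ℝ), y ^ (-(1 + β))) = 1 / β := by
    rw [integral_Ioi_rpow_of_lt (by linarith) one_pos]
    rw [show (-(1+β) + 1) = -β by ring, Real.one_rpow]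
    field_simp
  have hDCT : Tendsto (fun r : ℝ => ∫ y in Ioi (1:ℝ), F r y) atTop
      (nhds (∫ y in Ioi (1:ℝ), y ^ (-(1 + β)))) := by
    apply MeasureTheory.tendsto_integral_filter_of_dominated_convergence
      (fun y : ℝ => 2 ^ (1+β) * y ^ (-(1+β)))
    · refine Eventually.of_forall (fun r => ?_)
      have : Measurable (F r) := by
        apply Measurable.indicator ?_ measurableSet_Ioc
        fun_prop
      exact this.aestronglyMeasurable
    · filter_upwards [eventually_ge_atTop (0:ℝ)] with r hr
      refine (ae_restrict_iff' measurableSet_Ioi).2 (Eventually.of_forall fun y hy => ?_)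
      have hy1 : (1:ℝ) < y := hy
      by_cases hyr : y ∈ Ioc (1:ℝ) (r/2)
      · show ‖(Ioc (1:ℝ) (r/2)).indicator (f r) y‖ ≤ 2 ^ (1+β) * y ^ (-(1+β))
        rw [indicator_of_mem hyr]
        have hry : r/2 ≤ r - y := by have := hyr.2; linarith
        have hy0 : (0:ℝ) < y := by linarith
        have hry0 : (0:ℝ) < r - y := by
          have h2 := hyr.2; have h1 := hyr.1; linarith
        have hbase : 0 ≤ r / ((r - y) * y) := by positivity
        rw [Real.norm_eq_abs, abs_of_nonneg (Real.rpow_nonneg hbase _)]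
        have hle : r / ((r - y) * y) ≤ 2 / y := by
          rw [div_le_div_iff₀ (by positivity) hy0]
          nlinarith [hyr.2]
        calc (r / ((r - y) * y)) ^ (1+β) ≤ (2 / y) ^ (1+β) :=
              Real.rpow_le_rpow hbase hle hexp
          _ = 2 ^ (1+β) * y ^ (-(1+β)) := by
              rw [Real.div_rpow (by norm_num) hy0.le, Real.rpow_neg hy0.le,
                div_eq_mul_inv]
      · show ‖(Ioc (1:ℝ) (r/2)).indicator (f r) y‖ ≤ 2 ^ (1+β) * y ^ (-(1+β))
        rw [indicator_of_notMem hyr, norm_zero]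
        positivity
    · exact (integrableOn_Ioi_rpow_of_lt (by linarith : -(1+β) < -1)
        one_pos).const_mul _
    · refine (ae_restrict_iff' measurableSet_Ioi).2 (Eventually.of_forall fun y hy => ?_)
      have hy1 : (1:ℝ) < y := hy
      have hy0 : (0:ℝ) < y := by linarith
      have hbase : Tendsto (fun r : ℝ => r / ((r - y) * y)) atTop (nhds y⁻¹) := by
        have h1 : Tendsto (fun r : ℝ => r - y) atTop atTop :=
          tendsto_atTop_add_const_right _ _ tendsto_id
        have h2 : Tendsto (fun r : ℝ => y / (r - y)) atTop (nhds 0) :=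
          Tendsto.div_atTop tendsto_const_nhds h1
        have h3 : Tendsto (fun r : ℝ => (1 + y / (r - y)) * y⁻¹) atTop
            (nhds ((1 + 0) * y⁻¹)) :=
          ((tendsto_const_nhds.add h2).mul tendsto_const_nhds)
        rw [show (1 + (0:ℝ)) * y⁻¹ = y⁻¹ by ring] at h3
        apply h3.congr'
        filter_upwards [eventually_gt_atTop (y + 1)] with r hr
        have hry : r - y ≠ 0 := by nlinarith
        field_simp
        ring
      have hlim : Tendsto (fun r : ℝ => f r y) atTop (nhds (y ^ (-(1+β)))) := by
        have := hbase.rpow_const (p := 1 + β) (Or.inr hexp)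
        rwa [Real.inv_rpow hy0.le, ← Real.rpow_neg hy0.le] at this
      apply hlim.congr'
      filter_upwards [eventually_ge_atTop (2*y)] with r hr
      exact (Set.indicator_of_mem
        (show y ∈ Ioc (1:ℝ) (r/2) from ⟨hy1, by linarith⟩) (f r)).symm
  rw [hval] at hDCT
  have hkey : ∀ᶠ r : ℝ in atTop,
      2 * ∫ y in Ioi (1:ℝ), F r y = ∫ y in (1:ℝ)..(r-1), f r y := by
    filter_upwards [eventually_ge_atTop (4:ℝ)] with r hr
    have hcont : ContinuousOn (f r) (Icc 1 (r-1)) := by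
      apply ContinuousOn.rpow_const
      · apply ContinuousOn.div continuousOn_const (by fun_prop)
        intro y hy
        have h1 := hy.1; have h2 := hy.2
        have : 0 < (r - y) * y := mul_pos (by linarith) (by linarith)
        exact this.ne'
      · intro y _; exact Or.inr hexp
    have hi1 : IntervalIntegrable (f r) volume 1 (r/2) := by
      apply (hcont.mono ?_).intervalIntegrable
      rw [uIcc_of_le (by linarith)]
      exact Icc_subset_Icc le_rfl (by linarith)
    have hi2 : IntervalIntegrable (f r) volume (r/2) (r-1) := by
      apply (hcont.mono ?_).intervalIntegrable
      rw [uIcc_of_le (by linarith)]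
      exact Icc_subset_Icc (by linarith) le_rfl
    have hsplit := integral_add_adjacent_intervals hi1 hi2
    have hsym : (∫ y in (r/2)..(r-1), f r y) = ∫ y in (1:ℝ)..(r/2), f r y := by
      have h1 : (∫ y in (r/2)..(r-1), f r y)
          = ∫ y in (r/2)..(r-1), f r (r - y) := by
        apply integral_congr
        intro x _
        simp only [hf]
        congr 2
        ring
      rw [h1, integral_comp_sub_left (f r) r,
        show r - (r-1) = 1 by ring, show r - r/2 = r/2 by ring]
    have hset : (∫ y in (1:ℝ)..(r/2), f r y) = ∫ y in Ioi (1:ℝ), F r y := by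
      rw [integral_of_le (by linarith : (1:ℝ) ≤ r/2), hF,
        setIntegral_indicator measurableSet_Ioc,
        inter_eq_right.mpr Ioc_subset_Ioi_self]
    rw [← hsplit, hsym, hset]
    ring
  have h2 : Tendsto (fun r : ℝ => 2 * ∫ y in Ioi (1:ℝ), F r y) atTop
      (nhds (2 * (1/β))) := hDCT.const_mul 2
  rw [show (2:ℝ) * (1/β) = 2/β by ring] at h2
  exact h2.congr' hkey

/-- With `g(x) = (α/c) e^{−λx} x^{−(1+β)} 𝟙_{(1,∞)}(x)`
(`α,λ > 0`, `β ∈ (0,1)`, `c = α∫₁^∞ e^{−λx} x^{−(1+β)} dx`),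
`lim_{r→∞} (1/g(r)) ∫₁^{r−1} g(r−y) g(y) dy = 2α/(βc)`; equivalently,
`lim_{r→∞} ∫₁^{r−1} (r/((r−y)y))^{1+β} dy = 2/β`. -/
theorem temperedStable_convolution_tail_limit
    (α lam β c : ℝ) (hα : 0 < α) (hlam : 0 < lam) (hβ : β ∈ Set.Ioo (0:ℝ) 1)
    (hc : c = α * ∫ x in Set.Ioi (1:ℝ), Real.exp (-lam * x) * x ^ (-(1 + β)))
    (g : ℝ → ℝ)
    (hg : ∀ x : ℝ, g x =
      if 1 < x then α / c * Real.exp (-lam * x) * x ^ (-(1 + β)) else 0) :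
    Filter.Tendsto
        (fun r : ℝ => (∫ y in (1:ℝ)..(r - 1), g (r - y) * g y) / g r)
        Filter.atTop (nhds (2 * α / (β * c))) ∧
      Filter.Tendsto
        (fun r : ℝ => ∫ y in (1:ℝ)..(r - 1), (r / ((r - y) * y)) ^ (1 + β))
        Filter.atTop (nhds (2 / β)) := by
  obtain ⟨hβ0, hβ1⟩ := hβ
  have hexp : (0:ℝ) ≤ 1 + β := by linarith
  have haux := tail_aux hβ0
  -- integrability and positivity of the normalizing integral
  have hInt : IntegrableOn (fun x : ℝ => Real.exp (-lam * x) * x ^ (-(1 + β)))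
      (Ioi 1) := by
    apply Integrable.mono' (integrableOn_Ioi_rpow_of_lt
      (by linarith : -(1+β) < -1) one_pos)
    · exact (by fun_prop : Measurable
        (fun x : ℝ => Real.exp (-lam * x) * x ^ (-(1 + β)))).aestronglyMeasurable
    · refine (ae_restrict_iff' measurableSet_Ioi).2 (Eventually.of_forall fun x hx => ?_)
      have hx1 : (1:ℝ) < x := hx
      have hx0 : (0:ℝ) < x := by linarith
      rw [Real.norm_eq_abs, abs_of_nonneg
        (mul_nonneg (Real.exp_nonneg _) (Real.rpow_nonneg hx0.le _))]
      have he : Real.exp (-lam * x) ≤ 1 := by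
        rw [Real.exp_le_one_iff]
        nlinarith
      nlinarith [Real.rpow_pos_of_pos hx0 (-(1+β)), Real.exp_pos (-lam * x)]
  have hIpos : 0 < ∫ x in Ioi (1:ℝ), Real.exp (-lam * x) * x ^ (-(1 + β)) := by
    rw [setIntegral_pos_iff_support_of_nonneg_ae ?_ hInt]
    · refine lt_of_lt_of_le ?_ (measure_mono (s := Ioi (1:ℝ)) fun x hx => ?_)
      · rw [Real.volume_Ioi]
        exact ENNReal.zero_lt_top
      · have hx1 : (1:ℝ) < x := hx
        have hx0 : (0:ℝ) < x := by linarith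
        exact ⟨(mul_pos (Real.exp_pos _) (Real.rpow_pos_of_pos hx0 _)).ne', hx⟩
    · refine (ae_restrict_iff' measurableSet_Ioi).2 (Eventually.of_forall fun x hx => ?_)
      have hx0 : (0:ℝ) < x := by have : (1:ℝ) < x := hx; linarith
      exact mul_nonneg (Real.exp_nonneg _) (Real.rpow_nonneg hx0.le _)
  have hcpos : 0 < c := by rw [hc]; exact mul_pos hα hIpos
  have hcne : c ≠ 0 := hcpos.ne'
  -- eventual identity between the two quantities
  have heq : ∀ᶠ r : ℝ in atTop,
      (∫ y in (1:ℝ)..(r-1), g (r-y) * g y) / g r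
        = α / c * ∫ y in (1:ℝ)..(r-1), (r / ((r-y)*y)) ^ (1+β) := by
    filter_upwards [eventually_ge_atTop (4:ℝ)] with r hr
    have hr1 : (1:ℝ) < r := by linarith
    have hr0 : (0:ℝ) < r := by linarith
    have hgr : g r = α / c * Real.exp (-lam*r) * r ^ (-(1+β)) := by
      rw [hg]; rw [if_pos hr1]
    have hgrne : g r ≠ 0 := by
      rw [hgr]; positivity
    have hint : (∫ y in (1:ℝ)..(r-1), g (r-y) * g y)
        = ∫ y in (1:ℝ)..(r-1), g r * (α / c * (r / ((r-y)*y)) ^ (1+β)) := by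
      apply intervalIntegral.integral_congr_ae
      have hne : ∀ᵐ x : ℝ, x ≠ r - 1 := by
        rw [ae_iff]
        simp only [not_not, setOf_eq_eq_singleton]
        exact measure_singleton _
      filter_upwards [hne] with x hxne hx
      rw [uIoc_of_le (by linarith : (1:ℝ) ≤ r-1)] at hx
      have hx1 : 1 < x := hx.1
      have hxr : x < r - 1 := lt_of_le_of_ne hx.2 hxne
      have hrx1 : 1 < r - x := by linarith
      have hx0 : (0:ℝ) < x := by linarith
      have hrx0 : (0:ℝ) < r - x := by linarith
      rw [hg (r - x), hg x, if_pos hrx1, if_pos hx1, hgr]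
      have hE : Real.exp (-(lam*(r-x))) * Real.exp (-(lam*x)) = Real.exp (-(lam*r)) := by
        rw [← Real.exp_add]; ring_nf
      rw [Real.div_rpow hr0.le (by positivity), Real.mul_rpow hrx0.le hx0.le,
        Real.rpow_neg hrx0.le, Real.rpow_neg hx0.le, Real.rpow_neg hr0.le]
      have hA : (r - x) ^ (1+β) ≠ 0 := (Real.rpow_pos_of_pos hrx0 _).ne'
      have hB : x ^ (1+β) ≠ 0 := (Real.rpow_pos_of_pos hx0 _).ne'
      have hR : r ^ (1+β) ≠ 0 := (Real.rpow_pos_of_pos hr0 _).ne'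
      field_simp
      rw [← hE]
    rw [hint]
    have : (∫ y in (1:ℝ)..(r-1), g r * (α / c * (r / ((r-y)*y)) ^ (1+β)))
        = g r * (α / c * ∫ y in (1:ℝ)..(r-1), (r / ((r-y)*y)) ^ (1+β)) := by
      rw [intervalIntegral.integral_const_mul, intervalIntegral.integral_const_mul]
    rw [this, mul_div_cancel_left₀ _ hgrne]
  constructor
  · have h := haux.const_mul (α/c)
    rw [show α/c * (2/β) = 2*α/(β*c) by
      rw [div_mul_div_comm, mul_comm α 2, mul_comm c β]] at h
    exact h.congr' (Filter.EventuallyEq.symm heq)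
  · exact haux
end

section
/- Let F₁ and F₂ be Lévy measures on ℝ with densities f_j(x) = α_j⁺ x^{−(1+β_j⁺)} e^{−λ_j⁺ x}𝟙_{(0,∞)}(x) + α_j⁻ |x|^{−(1+β_j⁻)} e^{−λ_j⁻|x|}𝟙_{(−∞,0)}(x) for j = 1,2, with all α_j^±, λ_j^± > 0 and β_j^± ∈ [0,1), and let Φ = dF₂/dF₁. Then ∫_ℝ (1 − √Φ(x))² F₁(dx) < ∞ if and only if α₁⁺ = α₂⁺, α₁⁻ = α₂⁻, β₁⁺ = β₂⁺, and β₁⁻ = β₂⁻. -/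
open MeasureTheory Set Filter

private lemma sqrt_rpow_half {b x : ℝ} (hx : 0 < x) :
    Real.sqrt (x ^ (-(1 + b))) = x ^ (-(1 + b) / 2) := by
  rw [Real.sqrt_eq_rpow, ← Real.rpow_mul hx.le]
  congr 1; ring

private lemma sqrt_form {a b l x : ℝ} (ha : 0 ≤ a) (hx : 0 < x) :
    Real.sqrt (a * x ^ (-(1 + b)) * Real.exp (-l * x))
      = Real.sqrt a * x ^ (-(1 + b) / 2) * Real.exp (-l * x / 2) := by
  rw [Real.sqrt_mul (by positivity : (0:ℝ) ≤ a * x ^ (-(1+b))), Real.sqrt_mul ha,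
    Real.exp_half, sqrt_rpow_half hx]

private lemma hellinger_eq {A B : ℝ} (hA : 0 < A) (hB : 0 ≤ B) :
    (1 - Real.sqrt (B / A)) ^ 2 * A = (Real.sqrt A - Real.sqrt B) ^ 2 := by
  have hsA : 0 < Real.sqrt A := Real.sqrt_pos.mpr hA
  have h2 : Real.sqrt A ^ 2 = A := Real.sq_sqrt hA.le
  have h1 : (1 : ℝ) - Real.sqrt B / Real.sqrt A = (Real.sqrt A - Real.sqrt B) / Real.sqrt A := by
    field_simp
  rw [Real.sqrt_div hB, h1, div_pow, h2, div_mul_cancel₀ _ hA.ne']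

private lemma exp_sub_exp_le {u v : ℝ} :
    |Real.exp (-u) - Real.exp (-v)| ≤ |u - v| * Real.exp (-min u v) := by
  wlog h : u ≤ v generalizing u v
  · rw [abs_sub_comm, abs_sub_comm u v, min_comm]
    exact this (le_of_not_ge h)
  rw [min_eq_left h]
  have h1 : Real.exp (-v) ≤ Real.exp (-u) := Real.exp_le_exp.mpr (by linarith)
  have h3 : 1 - Real.exp (-(v - u)) ≤ v - u := by
    nlinarith [Real.add_one_le_exp (-(v - u))]
  have h4 : 0 ≤ 1 - Real.exp (-(v - u)) := by
    have := Real.exp_le_one_iff.mpr (by linarith : -(v - u) ≤ 0)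
    linarith
  have he : Real.exp (-u) - Real.exp (-v) = Real.exp (-u) * (1 - Real.exp (-(v - u))) := by
    rw [mul_sub, mul_one, ← Real.exp_add]; ring_nf
  rw [abs_of_nonneg (by linarith), abs_of_nonpos (by linarith), he]
  calc Real.exp (-u) * (1 - Real.exp (-(v-u))) ≤ Real.exp (-u) * (v - u) :=
        mul_le_mul_of_nonneg_left h3 (Real.exp_pos _).le
    _ = -(u - v) * Real.exp (-u) := by ring
private lemma integrable_aux {a b l1 l2 : ℝ} (ha : 0 ≤ a) (hb0 : 0 ≤ b) (hb1 : b < 1)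
    (hl1 : 0 < l1) (hl2 : 0 < l2) :
    IntegrableOn (fun x => (Real.sqrt a * x ^ (-(1 + b) / 2) * Real.exp (-l1 * x / 2)
      - Real.sqrt a * x ^ (-(1 + b) / 2) * Real.exp (-l2 * x / 2)) ^ 2) (Set.Ioi 0) := by
  set m := min l1 l2 with hm
  have hmpos : 0 < m := lt_min hl1 hl2
  have hdom : IntegrableOn
      (fun x => (a * ((l1 - l2) / 2) ^ 2) * (x ^ (1 - b) * Real.exp (-m * x)))
      (Set.Ioi 0) := by
    have h := (integrableOn_rpow_mul_exp_neg_mul_rpow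
      (by linarith : (-1:ℝ) < 1 - b) (zero_lt_one (α := ℝ)) hmpos)
    simp only [Real.rpow_one] at h
    exact h.const_mul _
  refine hdom.mono' ?_ ?_
  · refine (ContinuousOn.aestronglyMeasurable ?_ measurableSet_Ioi)
    apply ContinuousOn.pow
    apply ContinuousOn.sub <;>
    · apply ContinuousOn.mul
      · exact continuousOn_const.mul
          (continuousOn_id.rpow_const fun x hx => Or.inl (ne_of_gt hx))
      · exact (Real.continuous_exp.comp (by continuity)).continuousOn
  · filter_upwards [ae_restrict_mem measurableSet_Ioi] with x hx
    have hx0 : (0:ℝ) < x := hx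
    set E1 := Real.exp (-(l1 * x / 2)) with hE1
    set E2 := Real.exp (-(l2 * x / 2)) with hE2
    have hfact : Real.sqrt a * x ^ (-(1 + b) / 2) * Real.exp (-l1 * x / 2)
        - Real.sqrt a * x ^ (-(1 + b) / 2) * Real.exp (-l2 * x / 2)
        = Real.sqrt a * x ^ (-(1 + b) / 2) * (E1 - E2) := by
      rw [hE1, hE2]; ring_nf
    have hmin : min (l1 * x / 2) (l2 * x / 2) = m * x / 2 := by
      rcases le_total l1 l2 with h | h
      · rw [min_eq_left (by nlinarith), hm, min_eq_left h]
      · rw [min_eq_right (by nlinarith), hm, min_eq_right h]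
    have h := exp_sub_exp_le (u := l1 * x / 2) (v := l2 * x / 2)
    rw [hmin, ← hE1, ← hE2] at h
    set e := Real.exp (-(m * x / 2)) with he
    have hexp : (E1 - E2) ^ 2 ≤ (l1 * x / 2 - l2 * x / 2) ^ 2 * e ^ 2 := by
      calc (E1 - E2) ^ 2 = |E1 - E2| * |E1 - E2| := by rw [sq, ← abs_mul_abs_self]
        _ ≤ (|l1 * x / 2 - l2 * x / 2| * e) * (|l1 * x / 2 - l2 * x / 2| * e) :=
            mul_le_mul h h (abs_nonneg _) (by positivity)
        _ = |l1 * x / 2 - l2 * x / 2| ^ 2 * e ^ 2 := by ring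
        _ = _ := by rw [sq_abs]
    have hesq : e ^ 2 = Real.exp (-m * x) := by
      rw [he, sq, ← Real.exp_add]; congr 1; ring
    have hxq : (x ^ (-(1 + b) / 2) : ℝ) ^ 2 = x ^ (-(1 + b)) := by
      rw [← Real.rpow_natCast (x ^ (-(1 + b) / 2)) 2, ← Real.rpow_mul hx0.le]
      congr 1; push_cast; ring
    have hx2 : x ^ (-(1 + b)) * x ^ (2:ℕ) = x ^ (1 - b) := by
      rw [← Real.rpow_natCast x 2, ← Real.rpow_add hx0]
      congr 1; push_cast; ring
    rw [Real.norm_eq_abs, abs_of_nonneg (sq_nonneg _), hfact, mul_pow, mul_pow,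
      Real.sq_sqrt ha, hxq]
    calc a * x ^ (-(1 + b)) * (E1 - E2) ^ 2
        ≤ a * x ^ (-(1 + b)) * ((l1 * x / 2 - l2 * x / 2) ^ 2 * Real.exp (-m * x)) := by
          rw [← hesq]
          exact mul_le_mul_of_nonneg_left hexp (by positivity)
      _ = a * ((l1 - l2) / 2) ^ 2 * ((x ^ (-(1 + b)) * x ^ (2:ℕ)) * Real.exp (-m * x)) := by
          ring
      _ = a * ((l1 - l2) / 2) ^ 2 * (x ^ (1 - b) * Real.exp (-m * x)) := by rw [hx2]
private lemma not_integrable_aux {a1 a2 b1 b2 l1 l2 : ℝ} (ha1 : 0 < a1) (ha2 : 0 < a2)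
    (hb1 : 0 ≤ b1) (hble : b2 ≤ b1) (hne : b2 = b1 → a1 ≠ a2) :
    ¬ IntegrableOn (fun x => (Real.sqrt a1 * x ^ (-(1 + b1) / 2) * Real.exp (-l1 * x / 2)
        - Real.sqrt a2 * x ^ (-(1 + b2) / 2) * Real.exp (-l2 * x / 2)) ^ 2) (Set.Ioo 0 1) := by
  intro hint
  set s : ℝ := (b1 - b2) / 2 with hs
  set G : ℝ → ℝ := fun x => Real.sqrt a1 * Real.exp (-l1 * x / 2)
      - Real.sqrt a2 * x ^ s * Real.exp (-l2 * x / 2) with hG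
  -- the limit
  obtain ⟨L, hL0, hLlim⟩ : ∃ L : ℝ, L ≠ 0 ∧ Tendsto G (nhdsWithin 0 (Set.Ioi 0)) (nhds L) := by
    have he1 : Tendsto (fun x : ℝ => Real.sqrt a1 * Real.exp (-l1 * x / 2)) (nhds 0)
        (nhds (Real.sqrt a1)) := by
      have : Continuous (fun x : ℝ => Real.sqrt a1 * Real.exp (-l1 * x / 2)) := by continuity
      simpa using this.tendsto 0
    have he2 : Tendsto (fun x : ℝ => Real.exp (-l2 * x / 2)) (nhds 0) (nhds 1) := by
      have : Continuous (fun x : ℝ => Real.exp (-l2 * x / 2)) := by continuity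
      simpa using this.tendsto 0
    rcases lt_or_eq_of_le hble with hlt | heq
    · have hspos : 0 < s := by rw [hs]; linarith
      refine ⟨Real.sqrt a1, by positivity, ?_⟩
      have hxs : Tendsto (fun x : ℝ => x ^ s) (nhds 0) (nhds 0) := by
        have := (Real.continuousAt_rpow_const 0 s (Or.inr hspos.le)).tendsto
        simpa [Real.zero_rpow hspos.ne'] using this
      have h2 : Tendsto (fun x : ℝ => Real.sqrt a2 * x ^ s * Real.exp (-l2 * x / 2))
          (nhds 0) (nhds 0) := by
        have := (hxs.const_mul (Real.sqrt a2)).mul he2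
        simpa [mul_assoc] using this
      have := he1.sub h2
      rw [sub_zero] at this
      exact (this.mono_left nhdsWithin_le_nhds)
    · have hs0 : s = 0 := by rw [hs, heq]; ring
      refine ⟨Real.sqrt a1 - Real.sqrt a2, ?_, ?_⟩
      · exact sub_ne_zero.mpr fun h => hne heq ((Real.sqrt_inj ha1.le ha2.le).mp h)
      · have h2 : Tendsto (fun x : ℝ => Real.sqrt a2 * x ^ s * Real.exp (-l2 * x / 2))
            (nhds 0) (nhds (Real.sqrt a2)) := by
          simp only [hs0, Real.rpow_zero, mul_one]
          have : Continuous (fun x : ℝ => Real.sqrt a2 * Real.exp (-l2 * x / 2)) := by continuity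
          simpa using this.tendsto 0
        exact ((he1.sub h2).mono_left nhdsWithin_le_nhds)
  
  clear_value s G
  have habs : Tendsto (fun x => |G x|) (nhdsWithin 0 (Set.Ioi 0)) (nhds |L|) := hLlim.abs
  have hev : ∀ᶠ x in nhdsWithin (0:ℝ) (Set.Ioi 0), |L| / 2 ≤ |G x| :=
    habs.eventually_const_le (by have := abs_pos.mpr hL0; linarith)
  obtain ⟨δ, hδ, hsubδ⟩ := mem_nhdsGT_iff_exists_Ioo_subset.mp hev
  set ε : ℝ := min δ 1 with hε
  have hεpos : 0 < ε := lt_min hδ one_pos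
  have hint' : IntegrableOn (fun x => (Real.sqrt a1 * x ^ (-(1 + b1) / 2) * Real.exp (-l1 * x / 2)
        - Real.sqrt a2 * x ^ (-(1 + b2) / 2) * Real.exp (-l2 * x / 2)) ^ 2) (Set.Ioo 0 ε) :=
    hint.mono_set (Set.Ioo_subset_Ioo le_rfl (min_le_right _ _))
  have hpt : ∀ x ∈ Set.Ioo (0:ℝ) ε, L ^ 2 / 4 * x ^ (-(1 + b1))
      ≤ (Real.sqrt a1 * x ^ (-(1 + b1) / 2) * Real.exp (-l1 * x / 2)
        - Real.sqrt a2 * x ^ (-(1 + b2) / 2) * Real.exp (-l2 * x / 2)) ^ 2 := by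
    intro x hx
    have hx0 : (0:ℝ) < x := hx.1
    have hGx : |L| / 2 ≤ |G x| := by
      simpa using hsubδ ⟨hx.1, lt_of_lt_of_le hx.2 (min_le_left _ _)⟩
    have hxs : x ^ (-(1 + b1) / 2) * x ^ s = x ^ (-(1 + b2) / 2) := by
      rw [← Real.rpow_add hx0]; congr 1; rw [hs]; ring
    have hfact : Real.sqrt a1 * x ^ (-(1 + b1) / 2) * Real.exp (-l1 * x / 2)
        - Real.sqrt a2 * x ^ (-(1 + b2) / 2) * Real.exp (-l2 * x / 2)
        = x ^ (-(1 + b1) / 2) * G x := by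
      rw [hG, ← hxs]; ring
    have hxq : (x ^ (-(1 + b1) / 2) : ℝ) ^ 2 = x ^ (-(1 + b1)) := by
      rw [← Real.rpow_natCast (x ^ (-(1 + b1) / 2)) 2, ← Real.rpow_mul hx0.le]
      congr 1; push_cast; ring
    have hL2 : L ^ 2 / 4 ≤ (G x) ^ 2 := by
      have h := mul_self_le_mul_self (by positivity) hGx
      have e1 : |L| / 2 * (|L| / 2) = L ^ 2 / 4 := by
        rw [div_mul_div_comm, abs_mul_abs_self, ← sq]; norm_num
      have e2 : |G x| * |G x| = G x ^ 2 := by rw [abs_mul_abs_self, sq]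
      linarith
    rw [hfact, mul_pow, hxq, mul_comm]
    exact mul_le_mul_of_nonneg_left hL2 (by positivity)
  have hi2 : IntegrableOn (fun x => L ^ 2 / 4 * x ^ (-(1 + b1))) (Set.Ioo 0 ε) := by
    refine hint'.mono' ?_ ?_
    · exact (continuousOn_const.mul
        (continuousOn_id.rpow_const fun x hx => Or.inl (ne_of_gt hx.1))).aestronglyMeasurable
        measurableSet_Ioo
    · filter_upwards [ae_restrict_mem measurableSet_Ioo] with x hx
      rw [Real.norm_eq_abs, abs_of_nonneg
        (mul_nonneg (by positivity) (Real.rpow_nonneg hx.1.le _))]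
      exact hpt x hx
  have hi3 : IntegrableOn (fun x => x ^ (-(1 + b1))) (Set.Ioo (0:ℝ) ε) := by
    have hL4 : (L ^ 2 : ℝ) ≠ 0 := pow_ne_zero 2 hL0
    have h5 : IntegrableOn (fun x => 4 / L ^ 2 * (L ^ 2 / 4 * x ^ (-(1 + b1))))
        (Set.Ioo 0 ε) := hi2.const_mul _
    refine h5.congr_fun (fun x _ => ?_) measurableSet_Ioo
    field_simp
  rw [intervalIntegral.integrableOn_Ioo_rpow_iff hεpos] at hi3
  linarith

private lemma key_iff {a1 a2 b1 b2 l1 l2 : ℝ} (ha1 : 0 < a1) (ha2 : 0 < a2)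
    (hl1 : 0 < l1) (hl2 : 0 < l2) (hb1 : b1 ∈ Set.Ico (0:ℝ) 1) (hb2 : b2 ∈ Set.Ico (0:ℝ) 1) :
    IntegrableOn (fun x => (Real.sqrt a1 * x ^ (-(1 + b1) / 2) * Real.exp (-l1 * x / 2)
        - Real.sqrt a2 * x ^ (-(1 + b2) / 2) * Real.exp (-l2 * x / 2)) ^ 2) (Set.Ioi 0)
      ↔ (a1 = a2 ∧ b1 = b2) := by
  constructor
  · intro h
    by_contra hc
    rw [not_and_or] at hc
    rcases le_total b2 b1 with hble | hble
    · have hne : b2 = b1 → a1 ≠ a2 := fun hb => by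
        rcases hc with h' | h'
        · exact h'
        · exact absurd hb.symm h'
      exact not_integrable_aux ha1 ha2 hb1.1 hble hne (h.mono_set Set.Ioo_subset_Ioi_self)
    · have hne : b1 = b2 → a2 ≠ a1 := fun hb => by
        rcases hc with h' | h'
        · exact fun hcon => h' hcon.symm
        · exact absurd hb h'
    
      apply not_integrable_aux (l1 := l2) (l2 := l1) ha2 ha1 hb2.1 hble hne
      refine ((h.mono_set Set.Ioo_subset_Ioi_self).congr_fun (fun x _ => ?_) measurableSet_Ioo)
      ring
  · rintro ⟨h1, h2⟩
    subst h1; subst h2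
    exact integrable_aux ha1.le hb1.1 hb1.2 hl1 hl2

/-- For two tempered stable Lévy densities `f₁, f₂` and
`Φ = f₂/f₁`, the Hellinger-type integral `∫_ℝ (1 − √Φ(x))² F₁(dx)` is finite if and
only if `α₁⁺ = α₂⁺`, `α₁⁻ = α₂⁻`, `β₁⁺ = β₂⁺` and `β₁⁻ = β₂⁻`. -/
theorem temperedStable_equivalence_criterion
    (a1p a1m b1p b1m l1p l1m a2p a2m b2p b2m l2p l2m : ℝ)
    (ha1p : 0 < a1p) (ha1m : 0 < a1m) (hl1p : 0 < l1p) (hl1m : 0 < l1m)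
    (ha2p : 0 < a2p) (ha2m : 0 < a2m) (hl2p : 0 < l2p) (hl2m : 0 < l2m)
    (hb1p : b1p ∈ Set.Ico (0:ℝ) 1) (hb1m : b1m ∈ Set.Ico (0:ℝ) 1)
    (hb2p : b2p ∈ Set.Ico (0:ℝ) 1) (hb2m : b2m ∈ Set.Ico (0:ℝ) 1)
    (f₁ f₂ : ℝ → ℝ)
    (hf₁ : ∀ x : ℝ, f₁ x =
      if 0 < x then a1p * x ^ (-(1 + b1p)) * Real.exp (-l1p * x)
      else if x < 0 then a1m * |x| ^ (-(1 + b1m)) * Real.exp (-l1m * |x|)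
      else 0)
    (hf₂ : ∀ x : ℝ, f₂ x =
      if 0 < x then a2p * x ^ (-(1 + b2p)) * Real.exp (-l2p * x)
      else if x < 0 then a2m * |x| ^ (-(1 + b2m)) * Real.exp (-l2m * |x|)
      else 0) :
    Integrable (fun x => (1 - Real.sqrt (f₂ x / f₁ x)) ^ 2 * f₁ x)
      ↔ (a1p = a2p ∧ a1m = a2m ∧ b1p = b2p ∧ b1m = b2m) := by
  set g : ℝ → ℝ := fun x => (1 - Real.sqrt (f₂ x / f₁ x)) ^ 2 * f₁ x with hg
  have hsplit : Integrable g ↔ IntegrableOn g (Set.Iio 0) ∧ IntegrableOn g (Set.Ioi 0) := by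
    constructor
    · intro h; exact ⟨h.integrableOn, h.integrableOn⟩
    · rintro ⟨h1, h2⟩
      have h3 := h1.union h2
      rw [Set.Iio_union_Ioi] at h3
      rwa [IntegrableOn, MeasureTheory.restrict_compl_singleton] at h3
  have hpos : IntegrableOn g (Set.Ioi 0) ↔ (a1p = a2p ∧ b1p = b2p) := by
    have hEq : Set.EqOn g (fun x => (Real.sqrt a1p * x ^ (-(1 + b1p) / 2)
        * Real.exp (-l1p * x / 2) - Real.sqrt a2p * x ^ (-(1 + b2p) / 2)
        * Real.exp (-l2p * x / 2)) ^ 2) (Set.Ioi 0) := by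
      intro x hx
      have hx0 : (0:ℝ) < x := hx
      simp only [hg, hf₁ x, hf₂ x, if_pos hx0]
      rw [hellinger_eq (by positivity) (by positivity),
        sqrt_form ha1p.le hx0, sqrt_form ha2p.le hx0]
    rw [integrableOn_congr_fun hEq measurableSet_Ioi]
    exact key_iff ha1p ha2p hl1p hl2p hb1p hb2p
  have hneg : IntegrableOn g (Set.Iio 0) ↔ (a1m = a2m ∧ b1m = b2m) := by
    rw [← (Measure.measurePreserving_neg (volume : Measure ℝ)).integrableOn_comp_preimage
        (Homeomorph.neg ℝ).measurableEmbedding]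
    have hpre : (Neg.neg ⁻¹' (Set.Iio (0:ℝ))) = Set.Ioi 0 := by
      simp [Set.neg_preimage, Set.neg_Iio]
    rw [hpre]
    have hEq : Set.EqOn (g ∘ Neg.neg) (fun x => (Real.sqrt a1m * x ^ (-(1 + b1m) / 2)
        * Real.exp (-l1m * x / 2) - Real.sqrt a2m * x ^ (-(1 + b2m) / 2)
        * Real.exp (-l2m * x / 2)) ^ 2) (Set.Ioi 0) := by
      intro x hx
      have hx0 : (0:ℝ) < x := hx
      have hnx : ¬ (0 < -x) := by linarith
      have hnx2 : -x < 0 := by linarith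
      simp only [hg, Function.comp_apply, hf₁ (-x), hf₂ (-x), if_neg hnx, if_pos hnx2,
        abs_neg, abs_of_pos hx0]
      rw [hellinger_eq (by positivity) (by positivity),
        sqrt_form ha1m.le hx0, sqrt_form ha2m.le hx0]
    rw [integrableOn_congr_fun hEq measurableSet_Ioi]
    exact key_iff ha1m ha2m hl1m hl2m hb1m hb2m
  rw [hsplit, hneg, hpos]
  tauto
end

section
/- Let β⁺,β⁻ ∈ [0,1), λ⁺,λ⁻ > 0, and suppose sequences α_n⁺, α_n⁻, λ_n⁺, λ_n⁻ → ∞ satisfy Γ(1−β⁺)α_n⁺/(λ_n⁺)^{1−β⁺} → μ⁺ and Γ(1−β⁻)α_n⁻/(λ_n⁻)^{1−β⁻} → μ⁻ for some μ⁺, μ⁻ ≥ 0. Then for every u ∈ ℝ, the characteristic function φ_n(u) of TS(α_n⁺,β⁺,λ_n⁺;α_n⁻,β⁻,λ_n⁻) converges to e^{iuμ} with μ = μ⁺ − μ⁻; i.e., the distributions converge weakly to the Dirac measure δ_μ. -/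
/-- Characteristic function of a one-sided tempered stable distribution `TS(α,β,λ)`. -/
noncomputable def oneSidedTSCharFun (α β lam : ℝ) (z : ℝ) : ℂ :=
  if β = 0 then ((lam : ℂ) / ((lam : ℂ) - Complex.I * z)) ^ (α : ℂ)
  else Complex.exp ((α : ℂ) * Complex.Gamma (-(β : ℂ)) *
    (((lam : ℂ) - Complex.I * z) ^ (β : ℂ) - (lam : ℂ) ^ (β : ℂ)))

/-- Characteristic function of `TS(α⁺,β⁺,λ⁺;α⁻,β⁻,λ⁻)`. -/
noncomputable def tsCharFun (ap bp lp am bm lm : ℝ) (z : ℝ) : ℂ :=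
  oneSidedTSCharFun ap bp lp z * oneSidedTSCharFun am bm lm (-z)

open Filter Topology Complex

private lemma cpow_real_pos_mul {r : ℝ} (hr : 0 < r) {w : ℂ} (hw : w ≠ 0) (s : ℂ) :
    ((r : ℂ) * w) ^ s = (r : ℂ) ^ s * w ^ s := by
  have hr' : (r : ℂ) ≠ 0 := by exact_mod_cast hr.ne'
  rw [Complex.cpow_def_of_ne_zero (mul_ne_zero hr' hw),
    Complex.cpow_def_of_ne_zero hr', Complex.cpow_def_of_ne_zero hw,
    Complex.log_ofReal_mul hr hw, add_mul, Complex.exp_add,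
    Complex.ofReal_log hr.le]

private lemma wn_mem_slitPlane {L z : ℝ} (hL : 0 < L) :
    (1 - Complex.I * z / L : ℂ) ∈ Complex.slitPlane := by
  rw [Complex.mem_slitPlane_iff]
  left
  have : (Complex.I * z / L : ℂ).re = 0 := by
    simp [Complex.div_re, Complex.mul_re]
  simp [Complex.sub_re, this]

/-- Main one-sided convergence lemma. -/
private lemma oneSided_tendsto (β : ℝ) (hβ0 : 0 ≤ β) (hβ1 : β < 1)
    (α lam : ℕ → ℝ) (hα : ∀ n, 0 < α n) (hlam : ∀ n, 0 < lam n)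
    (hl : Tendsto lam atTop atTop) (μ : ℝ)
    (hc : Tendsto (fun n => Real.Gamma (1 - β) * α n / lam n ^ (1 - β)) atTop (𝓝 μ))
    (z : ℝ) :
    Tendsto (fun n => oneSidedTSCharFun (α n) β (lam n) z) atTop
      (𝓝 (Complex.exp (Complex.I * z * μ))) := by
  rcases eq_or_ne z 0 with rfl | hz
  · have : (fun n => oneSidedTSCharFun (α n) β (lam n) 0) = fun _ => 1 := by
      funext n
      have hL : ((lam n : ℂ)) ≠ 0 := by exact_mod_cast (hlam n).ne'
      unfold oneSidedTSCharFun
      split_ifs with h <;> simp [hL, div_self hL]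
    rw [this]
    simpa using tendsto_const_nhds
  -- z ≠ 0
  set w : ℕ → ℂ := fun n => 1 - Complex.I * z / lam n with hw
  have hLne : ∀ n, ((lam n : ℂ)) ≠ 0 := fun n => by exact_mod_cast (hlam n).ne'
  have hwslit : ∀ n, w n ∈ Complex.slitPlane := fun n => wn_mem_slitPlane (hlam n)
  have hwne0 : ∀ n, w n ≠ 0 := fun n => Complex.slitPlane_ne_zero (hwslit n)
  have hzc : (z : ℂ) ≠ 0 := by exact_mod_cast hz
  have hwne1 : ∀ n, w n ≠ 1 := by
    intro n h
    have h2 : Complex.I * z / lam n = 0 := by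
      have h3 : (1 : ℂ) - Complex.I * z / lam n = 1 := h
      exact sub_eq_self.mp h3
    rcases div_eq_zero_iff.mp h2 with h3 | h3
    · rcases mul_eq_zero.mp h3 with h4 | h4
      · exact Complex.I_ne_zero h4
      · exact hzc h4
    · exact hLne n h3
  have hfact : ∀ n, ((lam n : ℂ)) - Complex.I * z = (lam n : ℂ) * w n := by
    intro n
    have : (lam n : ℂ) * (Complex.I * z / lam n) = Complex.I * z :=
      mul_div_cancel₀ _ (hLne n)
    rw [hw]
    simp only [mul_sub, mul_one, this]
  -- w n → 1
  have hw1 : Tendsto w atTop (𝓝 1) := by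
    have h0 : Tendsto (fun n => ((lam n)⁻¹ : ℝ)) atTop (𝓝 0) := hl.inv_tendsto_atTop
    have h0' : Tendsto (fun n => (((lam n)⁻¹ : ℝ) : ℂ)) atTop (𝓝 0) := by
      have := (Complex.continuous_ofReal.tendsto 0).comp h0
      simpa [Function.comp_def] using this
    have : Tendsto (fun n => (1 : ℂ) - Complex.I * z * (((lam n)⁻¹ : ℝ) : ℂ)) atTop
        (𝓝 (1 - Complex.I * z * 0)) :=
      tendsto_const_nhds.sub (tendsto_const_nhds.mul h0')
    simp only [mul_zero, sub_zero] at this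
    apply this.congr
    intro n
    push_cast
    rw [hw]
    ring
  have hw1' : Tendsto w atTop (𝓝[≠] 1) := by
    rw [tendsto_nhdsWithin_iff]
    exact ⟨hw1, Eventually.of_forall fun n => hwne1 n⟩
  have hwsub : ∀ n, w n - 1 = -(Complex.I * z) / lam n := by
    intro n
    rw [hw]
    ring
  rcases eq_or_ne β 0 with rfl | hβ
  · -- β = 0 case
    -- slope of log at 1 tends to 1
    have h1s : (1 : ℂ) ∈ Complex.slitPlane := by simp [Complex.mem_slitPlane_iff]
    have hder : HasDerivAt Complex.log 1 1 := by
      simpa using Complex.hasDerivAt_log h1s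
    have hslope : Tendsto (fun n => Complex.log (w n) / (w n - 1)) atTop (𝓝 1) := by
      have := (hasDerivAt_iff_tendsto_slope.mp hder).comp hw1'
      apply this.congr
      intro n
      simp [slope_def_field]
    -- α/λ → μ
    have hcμ : Tendsto (fun n => ((α n / lam n : ℝ) : ℂ)) atTop (𝓝 (μ : ℂ)) := by
      have : Tendsto (fun n => (α n / lam n : ℝ)) atTop (𝓝 μ) := by
        apply hc.congr
        intro n
        rw [sub_zero, Real.Gamma_one, Real.rpow_one, one_mul]
      exact (Complex.continuous_ofReal.tendsto μ).comp this
    -- exponent tends to I z μ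
    have hexp : Tendsto (fun n => Complex.log (w n) / (w n - 1) *
        (Complex.I * z) * ((α n / lam n : ℝ) : ℂ)) atTop (𝓝 (Complex.I * z * μ)) := by
      have := (hslope.mul (tendsto_const_nhds (x := Complex.I * (z : ℂ)))).mul hcμ
      simpa using this
    have := hexp.cexp
    apply this.congr
    intro n
    have harg : (w n).arg ≠ Real.pi := Complex.slitPlane_arg_ne_pi (hwslit n)
    have hbase : ((lam n : ℂ)) / ((lam n : ℂ) - Complex.I * z) = (w n)⁻¹ := by
      rw [hfact n, div_mul_eq_div_div, div_self (hLne n), one_div]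
    unfold oneSidedTSCharFun
    rw [if_pos rfl, hbase, Complex.cpow_def_of_ne_zero (inv_ne_zero (hwne0 n)),
      Complex.log_inv _ harg]
    congr 1
    rw [hwsub n]
    have hIz : -(Complex.I * (z : ℂ)) ≠ 0 := by
      simp [Complex.I_ne_zero, hz]
    rw [div_div_eq_mul_div]
    field_simp [hLne n, hzc, Complex.I_ne_zero]
    rw [Complex.ofReal_div]
    linear_combination (-(Complex.log (w n) * (α n : ℂ))) * mul_inv_cancel₀ (hLne n)
  · -- 0 < β < 1 case
    have hβpos : 0 < β := lt_of_le_of_ne hβ0 (Ne.symm hβ)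
    have hβc : (β : ℂ) ≠ 0 := by exact_mod_cast hβ
    -- slope of cpow at 1 tends to β
    have hder : HasDerivAt (fun t : ℂ => t ^ (β : ℂ)) (β : ℂ) 1 := by
      have := (hasDerivAt_id (1 : ℂ)).cpow_const (c := (β : ℂ))
        (by simp [Complex.mem_slitPlane_iff])
      simpa using this
    have hslope : Tendsto (fun n => ((w n) ^ (β : ℂ) - 1) / (w n - 1)) atTop (𝓝 (β : ℂ)) := by
      have := (hasDerivAt_iff_tendsto_slope.mp hder).comp hw1'
      apply this.congr
      intro n
      simp [slope_def_field, Complex.one_cpow]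
    -- α/λ^(1-β) → μ/Γ(1-β)
    have hΓpos : 0 < Real.Gamma (1 - β) := Real.Gamma_pos_of_pos (by linarith)
    have hcμ : Tendsto (fun n => ((α n / lam n ^ (1 - β) : ℝ) : ℂ)) atTop
        (𝓝 ((μ / Real.Gamma (1 - β) : ℝ) : ℂ)) := by
      have : Tendsto (fun n => (α n / lam n ^ (1 - β) : ℝ)) atTop (𝓝 (μ / Real.Gamma (1 - β))) := by
        have := hc.div_const (Real.Gamma (1 - β))
        apply this.congr
        intro n
        rw [div_right_comm, mul_comm, mul_div_assoc, div_self hΓpos.ne', mul_one]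
      exact (Complex.continuous_ofReal.tendsto _).comp this
    -- Gamma identity
    have hΓid : Real.Gamma (1 - β) = -β * Real.Gamma (-β) := by
      have := Real.Gamma_add_one (s := -β) (by simpa using hβ)
      simpa [show -β + 1 = 1 - β by ring] using this
    have hΓc : Complex.Gamma (-(β : ℂ)) = ((Real.Gamma (-β) : ℝ) : ℂ) := by
      rw [show (-(β : ℂ)) = (((-β : ℝ)) : ℂ) by push_cast; ring, Complex.Gamma_ofReal]
    -- exponent tends to I z μ
    have hexp : Tendsto (fun n => Complex.Gamma (-(β : ℂ)) *
        (((w n) ^ (β : ℂ) - 1) / (w n - 1)) * (-(Complex.I * z)) *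
        ((α n / lam n ^ (1 - β) : ℝ) : ℂ)) atTop (𝓝 (Complex.I * z * μ)) := by
      have h := (((tendsto_const_nhds (x := Complex.Gamma (-(β : ℂ)))).mul hslope).mul
        (tendsto_const_nhds (x := -(Complex.I * (z : ℂ))))).mul hcμ
      have hval : Complex.Gamma (-(β : ℂ)) * (β : ℂ) * (-(Complex.I * z)) *
          ((μ / Real.Gamma (1 - β) : ℝ) : ℂ) = Complex.I * z * μ := by
        rw [hΓc]
        have hΓne : (Real.Gamma (1 - β)) ≠ 0 := hΓpos.ne'
        have : ((Real.Gamma (-β) : ℝ) : ℂ) * (β : ℂ) = -((Real.Gamma (1 - β) : ℝ) : ℂ) := by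
          push_cast
          rw [hΓid]
          push_cast
          ring
        push_cast
        rw [hΓid]
        have hΓmne : (Real.Gamma (-β)) ≠ 0 := by
          intro h
          rw [h, mul_zero] at hΓid
          exact hΓne hΓid
        have h1 : ((Real.Gamma (-β) : ℝ) : ℂ) ≠ 0 := by exact_mod_cast hΓmne
        push_cast
        field_simp [h1, hβc]
      rw [← hval]
      exact h
    have := hexp.cexp
    apply this.congr
    intro n
    unfold oneSidedTSCharFun
    rw [if_neg hβ]
    congr 1
    rw [hfact n, cpow_real_pos_mul (hlam n) (hwne0 n)]
    have hLpow : ((lam n : ℂ)) ^ (β : ℂ) = (((lam n ^ β : ℝ)) : ℂ) :=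
      (Complex.ofReal_cpow (hlam n).le β).symm
    have hLpow' : (((lam n ^ (1 - β) : ℝ)) : ℂ) ≠ 0 := by
      exact_mod_cast (Real.rpow_pos_of_pos (hlam n) (1 - β)).ne'
    have hLrel : (lam n : ℝ) ^ β * lam n ^ (1 - β) = lam n := by
      rw [← Real.rpow_add (hlam n)]
      simp
    have hIz : (Complex.I * (z : ℂ)) ≠ 0 := by
      simp [Complex.I_ne_zero, hz]
    have hLrelC : (((lam n ^ β : ℝ)) : ℂ) * (((lam n ^ (1 - β) : ℝ)) : ℂ) = (lam n : ℂ) := by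
      exact_mod_cast congrArg (fun x : ℝ => (x : ℂ)) hLrel
    have hQne : (((lam n ^ β : ℝ)) : ℂ) ≠ 0 := by
      exact_mod_cast (Real.rpow_pos_of_pos (hlam n) β).ne'
    rw [hwsub n, hLpow, ← hLrelC]
    field_simp [hIz, hQne, hLpow']
    rw [Complex.ofReal_div]
    linear_combination (Complex.Gamma (-(β : ℂ)) * (w n ^ (β : ℂ) - 1) * (α n : ℂ)) * mul_inv_cancel₀ hLpow'

/-- If `α_n⁺, α_n⁻, λ_n⁺, λ_n⁻ → ∞` with
`Γ(1−β⁺)α_n⁺/(λ_n⁺)^{1−β⁺} → μ⁺` and `Γ(1−β⁻)α_n⁻/(λ_n⁻)^{1−β⁻} → μ⁻` (`μ⁺,μ⁻ ≥ 0`),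
then the characteristic functions of `TS(α_n⁺,β⁺,λ_n⁺;α_n⁻,β⁻,λ_n⁻)` converge pointwise
to `u ↦ e^{iuμ}` with `μ = μ⁺ − μ⁻`, i.e. the laws converge weakly to `δ_μ`. -/
theorem temperedStable_tendsto_dirac
    (bp bm : ℝ) (hbp : bp ∈ Set.Ico (0:ℝ) 1) (hbm : bm ∈ Set.Ico (0:ℝ) 1)
    (ap am lp lm : ℕ → ℝ)
    (hpos : ∀ n, 0 < ap n ∧ 0 < am n ∧ 0 < lp n ∧ 0 < lm n)
    (hap : Filter.Tendsto ap Filter.atTop Filter.atTop)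
    (ham : Filter.Tendsto am Filter.atTop Filter.atTop)
    (hlp : Filter.Tendsto lp Filter.atTop Filter.atTop)
    (hlm : Filter.Tendsto lm Filter.atTop Filter.atTop)
    (μp μm : ℝ) (hμp : 0 ≤ μp) (hμm : 0 ≤ μm)
    (hmp : Filter.Tendsto (fun n => Real.Gamma (1 - bp) * ap n / lp n ^ (1 - bp))
      Filter.atTop (nhds μp))
    (hmm : Filter.Tendsto (fun n => Real.Gamma (1 - bm) * am n / lm n ^ (1 - bm))
      Filter.atTop (nhds μm)) :
    ∀ u : ℝ, Filter.Tendsto (fun n => tsCharFun (ap n) bp (lp n) (am n) bm (lm n) u)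
      Filter.atTop (nhds (Complex.exp (Complex.I * u * ((μp - μm : ℝ) : ℂ)))) := by
  intro u
  have h1 := oneSided_tendsto bp hbp.1 hbp.2 ap lp (fun n => (hpos n).1)
    (fun n => (hpos n).2.2.1) hlp μp hmp u
  have h2 := oneSided_tendsto bm hbm.1 hbm.2 am lm (fun n => (hpos n).2.1)
    (fun n => (hpos n).2.2.2) hlm μm hmm (-u)
  have := h1.mul h2
  rw [← Complex.exp_add] at this
  have heq : Complex.I * u * μp + Complex.I * ((-u : ℝ) : ℂ) * μm
      = Complex.I * u * ((μp - μm : ℝ) : ℂ) := by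
    push_cast
    ring
  rw [heq] at this
  exact this
end

section
/- Let β⁺,β⁻ ∈ [0,1), and suppose sequences α_n⁺, α_n⁻, λ_n⁺, λ_n⁻ → ∞ satisfy Γ(1−β⁺)α_n⁺/(λ_n⁺)^{1−β⁺} − Γ(1−β⁻)α_n⁻/(λ_n⁻)^{1−β⁻} → μ, Γ(2−β⁺)α_n⁺/(λ_n⁺)^{2−β⁺} → (σ⁺)², and Γ(2−β⁻)α_n⁻/(λ_n⁻)^{2−β⁻} → (σ⁻)² with (σ⁺)²,(σ⁻)² > 0. Then the characteristic functions of TS(α_n⁺,β⁺,λ_n⁺;α_n⁻,β⁻,λ_n⁻) converge pointwise to u ↦ e^{iuμ − u²σ²/2} where σ² = (σ⁺)² + (σ⁻)²; i.e., the distributions converge weakly to N(μ,σ²). -/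
open Filter Topology Metric Complex

section helpers

lemma taylor2 {f f' : ℂ → ℂ} {c : ℂ}
    (hf : ∀ w ∈ ball (0:ℂ) 1, HasDerivAt f (f' w) w)
    (hf0 : f 0 = 0) (hf'0 : f' 0 = 0) (hf'' : HasDerivAt f' c 0) :
    Tendsto (fun w => f w / w ^ 2) (𝓝[≠] (0:ℂ)) (𝓝 (c / 2)) := by
  rw [Metric.tendsto_nhdsWithin_nhds]
  intro ε hε
  have hlo := (hasDerivAt_iff_isLittleO.mp hf'')
  rw [Asymptotics.isLittleO_iff] at hlo
  have h2 : ∀ᶠ ζ in 𝓝 (0:ℂ), ‖f' ζ - ζ * c‖ ≤ (ε/2) * ‖ζ‖ := by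
    filter_upwards [hlo (by positivity : (0:ℝ) < ε/2)] with ζ h
    simpa [hf'0, smul_eq_mul, mul_comm] using h
  rw [Metric.eventually_nhds_iff] at h2
  obtain ⟨δ, hδ, hδb⟩ := h2
  refine ⟨min δ 1, by positivity, ?_⟩
  intro w hw hwd
  rw [dist_eq_norm] at hwd ⊢
  simp only [sub_zero] at hwd
  have hw1 : ‖w‖ < 1 := lt_of_lt_of_le hwd (min_le_right _ _)
  have hwδ : ‖w‖ < δ := lt_of_lt_of_le hwd (min_le_left _ _)
  have hw0 : w ≠ 0 := hw
  -- MVT bound on closedBall 0 ‖w‖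
  have key : ‖f w - c * w ^ 2 / 2‖ ≤ (ε/2) * ‖w‖ * ‖w‖ := by
    have hsub : closedBall (0:ℂ) ‖w‖ ⊆ ball 0 1 := by
      intro ζ hζ
      simp only [mem_closedBall, dist_zero_right] at hζ
      exact mem_ball_zero_iff.mpr (lt_of_le_of_lt hζ hw1)
    have hder : ∀ ζ ∈ closedBall (0:ℂ) ‖w‖,
        HasDerivWithinAt (fun ζ => f ζ - c * ζ ^ 2 / 2) (f' ζ - c * ζ) (closedBall 0 ‖w‖) ζ := by
      intro ζ hζ
      have h1 : HasDerivAt (fun ζ : ℂ => f ζ - c * ζ ^ 2 / 2) (f' ζ - c * ζ) ζ := by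
        have ha := (hf ζ (hsub hζ))
        have hb : HasDerivAt (fun ζ : ℂ => c * ζ ^ 2 / 2) (c * ζ) ζ := by
          have := ((hasDerivAt_pow 2 ζ).const_mul c).div_const 2
          simpa [mul_comm, mul_assoc, mul_div_assoc] using this
        exact ha.sub hb
      exact h1.hasDerivWithinAt
    have hbound : ∀ ζ ∈ closedBall (0:ℂ) ‖w‖, ‖f' ζ - c * ζ‖ ≤ (ε/2) * ‖w‖ := by
      intro ζ hζ
      simp only [mem_closedBall, dist_zero_right] at hζ
      have : ‖f' ζ - ζ * c‖ ≤ (ε/2) * ‖ζ‖ := by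
        apply hδb
        simpa [dist_eq_norm] using lt_of_le_of_lt hζ hwδ
      calc ‖f' ζ - c * ζ‖ = ‖f' ζ - ζ * c‖ := by rw [mul_comm]
        _ ≤ (ε/2) * ‖ζ‖ := this
        _ ≤ (ε/2) * ‖w‖ := by gcongr
    have := (convex_closedBall (0:ℂ) ‖w‖).norm_image_sub_le_of_norm_hasDerivWithin_le
      hder hbound (mem_closedBall_self (norm_nonneg w)) (mem_closedBall_zero_iff.mpr le_rfl)
    simpa [hf0] using this
  have hw2 : ‖w ^ 2‖ = ‖w‖ * ‖w‖ := by rw [norm_pow]; ring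
  have : ‖f w / w ^ 2 - c / 2‖ = ‖f w - c * w ^ 2 / 2‖ / ‖w ^ 2‖ := by
    rw [← norm_div]
    congr 1
    field_simp
  rw [this]
  calc ‖f w - c * w ^ 2 / 2‖ / ‖w ^ 2‖ ≤ ((ε/2) * ‖w‖ * ‖w‖) / (‖w‖ * ‖w‖) := by
        rw [hw2]; gcongr
    _ = ε/2 := by
        have hn : (0:ℝ) < ‖w‖ := norm_pos_iff.mpr hw0
        rw [mul_assoc, mul_div_assoc, div_self (by positivity), mul_one]
    _ < ε := by linarith

lemma taylor_log :
    Tendsto (fun w => (Complex.log (1 - w) + w) / w ^ 2) (𝓝[≠] (0:ℂ)) (𝓝 (-1 / 2)) := by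
  have := taylor2 (f := fun w => Complex.log (1 - w) + w)
      (f' := fun w => 1 - (1 - w)⁻¹) (c := -1) ?_ (by simp) (by simp) ?_
  · simpa using this
  · intro w hw
    have hre : 0 < (1 - w).re := by
      simp only [mem_ball, dist_zero_right] at hw
      have := Complex.abs_re_le_norm w
      simp only [Complex.sub_re, Complex.one_re]
      have : w.re < 1 := lt_of_le_of_lt (le_trans (le_abs_self _) this) hw
      linarith
    have hbase : HasDerivAt (fun w : ℂ => 1 - w) (-1) w := (hasDerivAt_id w).const_sub 1
    have hlog : HasDerivAt (fun w : ℂ => Complex.log (1 - w)) (-1 / (1 - w)) w :=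
      hbase.clog (Or.inl hre)
    have := hlog.add (hasDerivAt_id w)
    refine this.congr_deriv ?_
    have h1w : (1 : ℂ) - w ≠ 0 := fun h => by simp [h] at hre
    field_simp
    ring
  · have hbase : HasDerivAt (fun w : ℂ => 1 - w) (-1) (0:ℂ) := (hasDerivAt_id 0).const_sub 1
    have hinv : HasDerivAt (fun w : ℂ => (1 - w)⁻¹) (-(-1) / (1 - 0) ^ 2) (0:ℂ) :=
      hbase.inv (by norm_num)
    have := hinv.const_sub 1
    refine this.congr_deriv ?_
    norm_num

lemma taylor_cpow (β : ℝ) :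
    Tendsto (fun w => ((1 - w) ^ (β:ℂ) - 1 + (β:ℂ) * w) / w ^ 2) (𝓝[≠] (0:ℂ))
      (𝓝 ((β:ℂ) * ((β:ℂ) - 1) / 2)) := by
  apply taylor2 (f' := fun w => (β:ℂ) - (β:ℂ) * (1 - w) ^ ((β:ℂ) - 1))
  · intro w hw
    have hre : 0 < (1 - w).re := by
      simp only [mem_ball, dist_zero_right] at hw
      have := Complex.abs_re_le_norm w
      simp only [Complex.sub_re, Complex.one_re]
      have : w.re < 1 := lt_of_le_of_lt (le_trans (le_abs_self _) this) hw
      linarith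
    have hbase : HasDerivAt (fun w : ℂ => 1 - w) (-1) w := (hasDerivAt_id w).const_sub 1
    have hpow := hbase.cpow_const (c := (β:ℂ)) (Or.inl hre)
    have := (hpow.sub_const 1).add ((hasDerivAt_id w).const_mul (β:ℂ))
    refine this.congr_deriv ?_
    ring
  · simp
  · simp
  · have hbase : HasDerivAt (fun w : ℂ => 1 - w) (-1) (0:ℂ) := (hasDerivAt_id 0).const_sub 1
    have hpow := hbase.cpow_const (c := (β:ℂ) - 1) (Or.inl (by norm_num))
    have := (hpow.const_mul (β:ℂ)).const_sub (β:ℂ)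
    refine this.congr_deriv ?_
    simp [Complex.one_cpow]
    ring

/-- The exponent of the TS characteristic function. -/
noncomputable def tsExp (α β lam : ℝ) (z : ℝ) : ℂ :=
  if β = 0 then (α : ℂ) * Complex.log ((lam : ℂ) / ((lam : ℂ) - Complex.I * z))
  else (α : ℂ) * Complex.Gamma (-(β : ℂ)) *
    (((lam : ℂ) - Complex.I * z) ^ (β : ℂ) - (lam : ℂ) ^ (β : ℂ))

lemma sub_I_ne_zero {lam : ℝ} (hl : 0 < lam) (z : ℝ) : (lam : ℂ) - Complex.I * z ≠ 0 := by
  intro h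
  have : ((lam : ℂ) - Complex.I * z).re = 0 := by rw [h]; simp
  simp [Complex.sub_re, Complex.mul_re] at this
  linarith

lemma oneSided_eq_exp (α β lam z : ℝ) (hl : 0 < lam) :
    oneSidedTSCharFun α β lam z = Complex.exp (tsExp α β lam z) := by
  unfold oneSidedTSCharFun tsExp
  split
  · rw [Complex.cpow_def_of_ne_zero, mul_comm]
    exact div_ne_zero (Complex.ofReal_ne_zero.mpr hl.ne') (sub_I_ne_zero hl z)
  · rfl

end helpers
lemma tendsto_w {lam : ℕ → ℝ} (hlam : ∀ n, 0 < lam n) (hl : Tendsto lam atTop atTop)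
    {z : ℝ} (hz : z ≠ 0) :
    Tendsto (fun n => Complex.I * z / lam n) atTop (𝓝[≠] (0:ℂ)) := by
  rw [tendsto_nhdsWithin_iff]
  constructor
  · have h1 : Tendsto (fun n => (lam n)⁻¹) atTop (𝓝 0) := tendsto_inv_atTop_zero.comp hl
    have h2 : Tendsto (fun n => ((lam n : ℝ) : ℂ)⁻¹) atTop (𝓝 0) := by
      have := (Complex.continuous_ofReal.tendsto 0).comp h1
      simpa [Function.comp_def] using this
    have := h2.const_mul (Complex.I * z)
    simpa [div_eq_mul_inv] using this
  · filter_upwards with n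
    exact div_ne_zero (mul_ne_zero Complex.I_ne_zero (Complex.ofReal_ne_zero.mpr hz))
      (Complex.ofReal_ne_zero.mpr (hlam n).ne')

lemma side (β : ℝ) (hβ0 : 0 ≤ β) (hβ1 : β < 1) (α lam : ℕ → ℝ)
    (hlam : ∀ n, 0 < lam n) (hl : Tendsto lam atTop atTop) (s : ℝ)
    (hv : Tendsto (fun n => Real.Gamma (2 - β) * α n / lam n ^ (2 - β)) atTop (𝓝 s)) (z : ℝ) :
    Tendsto (fun n => tsExp (α n) β (lam n) z
      - Complex.I * z * ((Real.Gamma (1 - β) * α n / lam n ^ (1 - β) : ℝ) : ℂ))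
      atTop (𝓝 (-(z:ℂ) ^ 2 * s / 2)) := by
  by_cases hz : z = 0
  · subst hz
    have : ∀ n, tsExp (α n) β (lam n) 0
        - Complex.I * ((0:ℝ):ℂ) * ((Real.Gamma (1 - β) * α n / lam n ^ (1 - β) : ℝ) : ℂ) = 0 := by
      intro n
      unfold tsExp
      have hln : ((lam n : ℝ) : ℂ) ≠ 0 := Complex.ofReal_ne_zero.mpr (hlam n).ne'
      split <;> simp [div_self hln]
    simp only [this]
    simpa using tendsto_const_nhds
  -- z ≠ 0
  set w : ℕ → ℂ := fun n => Complex.I * z / lam n with hw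
  have hwlim : Tendsto w atTop (𝓝[≠] (0:ℂ)) := tendsto_w hlam hl hz
  have hwn : ∀ n, w n ≠ 0 := fun n =>
    div_ne_zero (mul_ne_zero Complex.I_ne_zero (Complex.ofReal_ne_zero.mpr hz))
      (Complex.ofReal_ne_zero.mpr (hlam n).ne')
  have h1w : ∀ n, (1:ℂ) - w n ≠ 0 := by
    intro n h
    have : ((1:ℂ) - w n).re = 0 := by rw [h]; simp
    simp [hw, Complex.div_re, Complex.mul_re, Complex.normSq] at this
  by_cases hb : β = 0
  · subst hb
    have htay : Tendsto (fun n => (Complex.log (1 - w n) + w n) / (w n) ^ 2) atTop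
        (𝓝 (-1 / 2)) := taylor_log.comp hwlim
    have hvv : Tendsto (fun n => ((z ^ 2 * (α n / lam n ^ 2) : ℝ) : ℂ)) atTop
        (𝓝 ((z ^ 2 * s : ℝ) : ℂ)) := by
      apply (Complex.continuous_ofReal.tendsto _).comp
      have : Tendsto (fun n => α n / lam n ^ 2) atTop (𝓝 s) := by
        have := hv
        simp only [sub_zero, Real.Gamma_two, one_mul] at this
        convert this using 2 with n
        rw [show (2:ℝ) = ((2:ℕ):ℝ) by norm_num, Real.rpow_natCast]
      simpa using this.const_mul (z ^ 2)
    have hmul := hvv.mul htay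
    have heq : ∀ n, tsExp (α n) 0 (lam n) z
        - Complex.I * z * ((Real.Gamma (1 - 0) * α n / lam n ^ ((1:ℝ) - 0) : ℝ) : ℂ)
        = ((z ^ 2 * (α n / lam n ^ 2) : ℝ) : ℂ)
          * ((Complex.log (1 - w n) + w n) / (w n) ^ 2) := by
      intro n
      have hlp := hlam n
      have hln : ((lam n : ℝ) : ℂ) ≠ 0 := Complex.ofReal_ne_zero.mpr hlp.ne'
      have hsub : (lam n : ℂ) - Complex.I * z ≠ 0 := sub_I_ne_zero hlp z
      have hbase : ((lam n : ℂ)) / ((lam n : ℂ) - Complex.I * z) = (1 - w n)⁻¹ := by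
        simp only [hw]
        field_simp
      have hloginv : Complex.log ((1 - w n)⁻¹) = -Complex.log (1 - w n) := by
        apply Complex.log_inv
        rw [Ne, Complex.arg_eq_pi_iff]
        rintro ⟨h1, -⟩
        have : ((1:ℂ) - w n).re = 1 := by
          simp [hw, Complex.div_re, Complex.mul_re, Complex.normSq]
        rw [this] at h1; linarith
      unfold tsExp
      rw [if_pos rfl, hbase, hloginv]
      simp only [sub_zero, Real.Gamma_one, one_mul, Real.rpow_one]
      set X := Complex.log (1 - w n) with hX
      have hCw : ((z ^ 2 * (α n / lam n ^ 2) : ℝ) : ℂ) = -(α n : ℂ) * (w n) ^ 2 := by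
        simp only [hw]
        push_cast
        rw [div_pow, mul_pow, Complex.I_sq]
        field_simp
      rw [hCw]
      have h6 : (-(α n : ℂ) * (w n) ^ 2) * ((X + w n) / (w n) ^ 2)
          = -(α n : ℂ) * (X + w n) := by
        field_simp [hwn n]
      rw [h6]
      simp only [hw]
      push_cast
      field_simp
      ring
    rw [show -(z:ℂ) ^ 2 * s / 2 = ((z ^ 2 * s : ℝ) : ℂ) * (-1 / 2) by push_cast; ring]
    exact Tendsto.congr (fun n => (heq n).symm) hmul
  · -- 0 < β < 1
    have hb' : 0 < β := lt_of_le_of_ne hβ0 (Ne.symm hb)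
    have hβn : -β ≠ 0 := neg_ne_zero.mpr hb
    have h1βn : (1:ℝ) - β ≠ 0 := by linarith
    have hG1 : Real.Gamma (1 - β) = -β * Real.Gamma (-β) := by
      rw [show (1:ℝ) - β = -β + 1 by ring, Real.Gamma_add_one hβn]
    have hG2 : Real.Gamma (2 - β) = β * (β - 1) * Real.Gamma (-β) := by
      rw [show (2:ℝ) - β = (1 - β) + 1 by ring, Real.Gamma_add_one h1βn, hG1]
      ring
    have htay : Tendsto (fun n => ((1 - w n) ^ (β:ℂ) - 1 + (β:ℂ) * w n) / (w n) ^ 2) atTop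
        (𝓝 ((β:ℂ) * ((β:ℂ) - 1) / 2)) := (taylor_cpow β).comp hwlim
    have hvv : Tendsto (fun n =>
        ((-z ^ 2 / (β * (β - 1)) * (Real.Gamma (2 - β) * α n / lam n ^ (2 - β)) : ℝ) : ℂ)) atTop
        (𝓝 ((-z ^ 2 / (β * (β - 1)) * s : ℝ) : ℂ)) := by
      apply (Complex.continuous_ofReal.tendsto _).comp
      exact hv.const_mul _
    have hmul := hvv.mul htay
    have hββ : (β:ℝ) * (β - 1) ≠ 0 := mul_ne_zero hb (by linarith)
    have heq : ∀ n, tsExp (α n) β (lam n) z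
        - Complex.I * z * ((Real.Gamma (1 - β) * α n / lam n ^ (1 - β) : ℝ) : ℂ)
        = ((-z ^ 2 / (β * (β - 1)) * (Real.Gamma (2 - β) * α n / lam n ^ (2 - β)) : ℝ) : ℂ)
          * (((1 - w n) ^ (β:ℂ) - 1 + (β:ℂ) * w n) / (w n) ^ 2) := by
      intro n
      have hlp := hlam n
      have hln : ((lam n : ℝ) : ℂ) ≠ 0 := Complex.ofReal_ne_zero.mpr hlp.ne'
      have hfact : (lam n : ℂ) - Complex.I * z = (lam n : ℂ) * (1 - w n) := by
        simp only [hw]; field_simp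
      have hsplit : ((lam n : ℂ) - Complex.I * z) ^ (β:ℂ)
          = (lam n : ℂ) ^ (β:ℂ) * (1 - w n) ^ (β:ℂ) := by
        rw [hfact, Complex.cpow_def_of_ne_zero (mul_ne_zero hln (h1w n)),
          Complex.cpow_def_of_ne_zero hln, Complex.cpow_def_of_ne_zero (h1w n),
          Complex.log_ofReal_mul hlp (h1w n), Complex.ofReal_log hlp.le, ← Complex.exp_add]
        congr 1
        ring
      have hcast : (lam n : ℂ) ^ (β:ℂ) = ((lam n ^ β : ℝ) : ℂ) :=
        (Complex.ofReal_cpow hlp.le β).symm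
      have hGc : Complex.Gamma (-(β:ℂ)) = ((Real.Gamma (-β) : ℝ) : ℂ) := by
        rw [show -(β:ℂ) = ((-β : ℝ) : ℂ) by push_cast; ring, Complex.Gamma_ofReal]
      have hr1 : lam n ^ (1 - β) * lam n ^ β = lam n := by
        rw [← Real.rpow_add hlp]; simp
      have hr2 : lam n ^ (2 - β) * lam n ^ β = lam n ^ 2 := by
        rw [← Real.rpow_add hlp, show (2:ℝ) - β + β = 2 by ring,
          show (2:ℝ) = ((2:ℕ):ℝ) by norm_num, Real.rpow_natCast]
      have hp : ((lam n ^ β : ℝ) : ℂ) ≠ 0 :=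
        Complex.ofReal_ne_zero.mpr (Real.rpow_pos_of_pos hlp _).ne'
      have e1 : ((lam n ^ (1 - β) : ℝ) : ℂ) = (lam n : ℂ) / ((lam n ^ β : ℝ) : ℂ) := by
        rw [eq_div_iff hp]
        exact_mod_cast congrArg (Complex.ofReal) hr1
      have e2 : ((lam n ^ (2 - β) : ℝ) : ℂ) = (lam n : ℂ) ^ 2 / ((lam n ^ β : ℝ) : ℂ) := by
        rw [eq_div_iff hp, ← Complex.ofReal_pow, ← hr2, Complex.ofReal_mul]
      unfold tsExp
      rw [if_neg hb, hsplit, hcast, hGc, hG1, hG2]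
      set X := (1 - w n) ^ (β:ℂ) with hX
      set p := ((lam n ^ β : ℝ) : ℂ) with hpp
      have hCw : ((-z ^ 2 / (β * (β - 1)) * (β * (β - 1) * Real.Gamma (-β) * α n
            / lam n ^ (2 - β)) : ℝ) : ℂ)
          = (α n : ℂ) * ((Real.Gamma (-β) : ℝ) : ℂ) * p * (w n) ^ 2 := by
        push_cast [e2]
        simp only [hw]
        rw [div_pow, mul_pow, Complex.I_sq]
        have hβc : ((β:ℂ)) ≠ 0 := Complex.ofReal_ne_zero.mpr hb
        have hβc1 : ((β:ℂ) - 1) ≠ 0 := by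
          rw [show ((β:ℂ) - 1) = ((β - 1 : ℝ) : ℂ) by push_cast; ring]
          exact Complex.ofReal_ne_zero.mpr (by linarith)
        field_simp
      rw [hCw]
      have h6 : ((α n : ℂ) * ((Real.Gamma (-β) : ℝ) : ℂ) * p * (w n) ^ 2)
          * ((X - 1 + (β:ℂ) * w n) / (w n) ^ 2)
          = (α n : ℂ) * ((Real.Gamma (-β) : ℝ) : ℂ) * p * (X - 1 + (β:ℂ) * w n) := by
        field_simp [hwn n]
      rw [h6]
      push_cast [e1]
      simp only [hw]
      field_simp
      ring
    rw [show -(z:ℂ) ^ 2 * s / 2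
        = ((-z ^ 2 / (β * (β - 1)) * s : ℝ) : ℂ) * ((β:ℂ) * ((β:ℂ) - 1) / 2) by
      rw [show (β:ℂ) * ((β:ℂ) - 1) / 2 = ((β * (β - 1) / 2 : ℝ) : ℂ) by push_cast; ring,
        ← Complex.ofReal_mul,
        show (-z ^ 2 / (β * (β - 1)) * s * (β * (β - 1) / 2) : ℝ) = -z ^ 2 * s / 2 by
          have h1 : β - 1 ≠ 0 := by linarith
          field_simp]
      push_cast
      ring]
    exact Tendsto.congr (fun n => (heq n).symm) hmul
/-- If `α_n⁺, α_n⁻, λ_n⁺, λ_n⁻ → ∞` with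
`Γ(1−β⁺)α_n⁺/(λ_n⁺)^{1−β⁺} − Γ(1−β⁻)α_n⁻/(λ_n⁻)^{1−β⁻} → μ`,
`Γ(2−β⁺)α_n⁺/(λ_n⁺)^{2−β⁺} → (σ⁺)² > 0` and `Γ(2−β⁻)α_n⁻/(λ_n⁻)^{2−β⁻} → (σ⁻)² > 0`,
then the characteristic functions of `TS(α_n⁺,β⁺,λ_n⁺;α_n⁻,β⁻,λ_n⁻)` converge
pointwise to `u ↦ e^{iuμ − u²σ²/2}` with `σ² = (σ⁺)² + (σ⁻)²`, i.e. the laws converge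
weakly to `N(μ,σ²)`. -/
theorem temperedStable_tendsto_gaussian
    (bp bm : ℝ) (hbp : bp ∈ Set.Ico (0:ℝ) 1) (hbm : bm ∈ Set.Ico (0:ℝ) 1)
    (ap am lp lm : ℕ → ℝ)
    (hpos : ∀ n, 0 < ap n ∧ 0 < am n ∧ 0 < lp n ∧ 0 < lm n)
    (hap : Filter.Tendsto ap Filter.atTop Filter.atTop)
    (ham : Filter.Tendsto am Filter.atTop Filter.atTop)
    (hlp : Filter.Tendsto lp Filter.atTop Filter.atTop)
    (hlm : Filter.Tendsto lm Filter.atTop Filter.atTop)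
    (μ sp2 sm2 : ℝ) (hsp : 0 < sp2) (hsm : 0 < sm2)
    (hmean : Filter.Tendsto
      (fun n => Real.Gamma (1 - bp) * ap n / lp n ^ (1 - bp) -
        Real.Gamma (1 - bm) * am n / lm n ^ (1 - bm)) Filter.atTop (nhds μ))
    (hvp : Filter.Tendsto (fun n => Real.Gamma (2 - bp) * ap n / lp n ^ (2 - bp))
      Filter.atTop (nhds sp2))
    (hvm : Filter.Tendsto (fun n => Real.Gamma (2 - bm) * am n / lm n ^ (2 - bm))
      Filter.atTop (nhds sm2)) :
    ∀ u : ℝ, Filter.Tendsto (fun n => tsCharFun (ap n) bp (lp n) (am n) bm (lm n) u)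
      Filter.atTop
      (nhds (Complex.exp (Complex.I * u * (μ : ℂ) -
        (u : ℂ) ^ 2 * ((sp2 + sm2 : ℝ) : ℂ) / 2))) := by
  intro u
  obtain ⟨hbp0, hbp1⟩ := hbp
  obtain ⟨hbm0, hbm1⟩ := hbm
  have hlpn : ∀ n, 0 < lp n := fun n => (hpos n).2.2.1
  have hlmn : ∀ n, 0 < lm n := fun n => (hpos n).2.2.2
  have h1 := side bp hbp0 hbp1 ap lp hlpn hlp sp2 hvp u
  have h2 := side bm hbm0 hbm1 am lm hlmn hlm sm2 hvm (-u)
  have h3 : Tendsto (fun n => Complex.I * u *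
      (((Real.Gamma (1 - bp) * ap n / lp n ^ (1 - bp)
        - Real.Gamma (1 - bm) * am n / lm n ^ (1 - bm)) : ℝ) : ℂ)) atTop
      (𝓝 (Complex.I * u * (μ : ℂ))) := by
    have h4 : Tendsto (fun n => (((Real.Gamma (1 - bp) * ap n / lp n ^ (1 - bp)
        - Real.Gamma (1 - bm) * am n / lm n ^ (1 - bm)) : ℝ) : ℂ)) atTop (𝓝 ((μ : ℝ) : ℂ)) := by
      have := (Complex.continuous_ofReal.tendsto μ).comp hmean
      simpa [Function.comp_def] using this
    exact h4.const_mul (Complex.I * u)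
  have hsum := (h1.add h2).add h3
  have hexp := hsum.cexp
  have hfn : ∀ n, tsCharFun (ap n) bp (lp n) (am n) bm (lm n) u
      = Complex.exp ((tsExp (ap n) bp (lp n) u
          - Complex.I * u * ((Real.Gamma (1 - bp) * ap n / lp n ^ (1 - bp) : ℝ) : ℂ)
        + (tsExp (am n) bm (lm n) (-u)
          - Complex.I * (-u : ℝ) * ((Real.Gamma (1 - bm) * am n / lm n ^ (1 - bm) : ℝ) : ℂ)))
        + Complex.I * u * (((Real.Gamma (1 - bp) * ap n / lp n ^ (1 - bp)
          - Real.Gamma (1 - bm) * am n / lm n ^ (1 - bm)) : ℝ) : ℂ)) := by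
    intro n
    rw [tsCharFun, oneSided_eq_exp _ _ _ _ (hlpn n), oneSided_eq_exp _ _ _ _ (hlmn n),
      ← Complex.exp_add]
    congr 1
    push_cast
    ring
  have hval : Complex.exp (-(u:ℂ) ^ 2 * sp2 / 2 + -((-u : ℝ) : ℂ) ^ 2 * sm2 / 2
      + Complex.I * u * (μ : ℂ))
      = Complex.exp (Complex.I * u * (μ : ℂ) - (u : ℂ) ^ 2 * ((sp2 + sm2 : ℝ) : ℂ) / 2) := by
    congr 1
    push_cast
    ring
  rw [← hval]
  exact Tendsto.congr (fun n => (hfn n).symm) hexp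
end
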